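/- arXiv:1804.01362 — 4 statements merged into one kernel-verified Lean document; each statement's English description precedes it below -/
import Mathlib

section
/- Let J be a g-function and let a:Ω→ℂ be α-Hölder. Then for every s>1 the series ζ₊(s) and ζ₋(s) converge absolutely and |ζ₊(s) − ζ₋(s)| ≤ (2^α − 1)^{−1} · Hol_α(a) · d(x,y)^α; in particular (s−1)[ζ₊(s) − ζ₋(s)] → 0 as s→1⁺. -/
open Real MeasureTheory Filter Topology Set

open scoped Classical

namespace GS

/-- The full shift space `Ω = 𝒜^ℕ`. -/
abbrev Omega (𝒜 : Type) : Type := ℕ → 𝒜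

variable {𝒜 : Type}

/-- The left shift `σ(x₁,x₂,…) = (x₂,x₃,…)`. -/
def shift (x : Omega 𝒜) : Omega 𝒜 := fun n => x (n + 1)

/-- Prepending a symbol: `qx = (q,x₁,x₂,…)`. -/
def cons (q : 𝒜) (x : Omega 𝒜) : Omega 𝒜 := fun n => Nat.casesOn n q x

/-- Concatenation `wx` of a finite word `w ∈ 𝒜^k` with `x ∈ Ω`. -/
def concat {k : ℕ} (w : Fin k → 𝒜) (x : Omega 𝒜) : Omega 𝒜 :=
  fun n => if h : n < k then w ⟨n, h⟩ else x (n - k)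

/-- The metric `d(x,y) = 2^{-N(x,y)}`, `N(x,y) = inf{k ≥ 1 : x_k ≠ y_k}`
(sequences are indexed from `0` in Lean, whence the `+ 1`). -/
noncomputable def dOmega (x y : Omega 𝒜) : ℝ :=
  if x = y then 0 else (1 / 2 : ℝ) ^ (sInf {k : ℕ | x k ≠ y k} + 1)

/-- `a : Ω → E` is `α`-Hölder (w.r.t. `dOmega`):
`Hol_α(a) = sup_{x≠y} ‖a x - a y‖ / d(x,y)^α < ∞`. -/
def IsHolderW (α : ℝ) {E : Type*} [NormedAddCommGroup E] (a : Omega 𝒜 → E) : Prop :=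
  ∃ C : ℝ, ∀ x y : Omega 𝒜, ‖a x - a y‖ ≤ C * (dOmega x y) ^ α

/-- The Hölder constant `Hol_α(a) = sup_{x≠y} ‖a x - a y‖ / d(x,y)^α`. -/
noncomputable def HolConst (α : ℝ) {E : Type*} [NormedAddCommGroup E] (a : Omega 𝒜 → E) : ℝ :=
  sSup {r : ℝ | ∃ x y : Omega 𝒜, x ≠ y ∧ r = ‖a x - a y‖ / (dOmega x y) ^ α}

/-- `J` is a `g`-function: continuous, strictly positive, with `∑_{q∈𝒜} J(qx) = 1`. -/
def IsGFunction [Fintype 𝒜] [TopologicalSpace 𝒜] (J : Omega 𝒜 → ℝ) : Prop :=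
  Continuous J ∧ (∀ x, 0 < J x) ∧ ∀ x : Omega 𝒜, ∑ q : 𝒜, J (cons q x) = 1

/-- The Ruelle transfer operator `(L_f φ)(x) = ∑_{q∈𝒜} e^{f(qx)} φ(qx)`. -/
noncomputable def ruelle [Fintype 𝒜] {E : Type*} [AddCommMonoid E] [Module ℝ E]
    (f : Omega 𝒜 → ℝ) (φ : Omega 𝒜 → E) : Omega 𝒜 → E :=
  fun x => ∑ q : 𝒜, Real.exp (f (cons q x)) • φ (cons q x)

/-- Birkhoff sum `S_k(f) = ∑_{j=0}^{k-1} f ∘ σ^j`. -/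
def birkhoff (f : Omega 𝒜 → ℝ) (k : ℕ) (x : Omega 𝒜) : ℝ :=
  ∑ j ∈ Finset.range k, f (shift^[j] x)

/-- `𝕁(wx) = exp (S_k(log J)(wx))` for a word `w` of length `k`. -/
noncomputable def JBirk (J : Omega 𝒜 → ℝ) (k : ℕ) (w : Fin k → 𝒜) (x : Omega 𝒜) : ℝ :=
  Real.exp (birkhoff (fun z => Real.log (J z)) k (concat w x))

/-- `ζ₊(s) = ∑_{k≥1} ∑_{w∈𝒜^k} a(wx) 𝕁(wx)^s`. -/
noncomputable def zetaPlus [Fintype 𝒜] (J : Omega 𝒜 → ℝ) (a : Omega 𝒜 → ℂ) (x : Omega 𝒜)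
    (s : ℝ) : ℂ :=
  ∑' k : ℕ, ∑ w : Fin (k + 1) → 𝒜, a (concat w x) * (((JBirk J (k + 1) w x) ^ s : ℝ) : ℂ)

/-- `ζ₋(s) = ∑_{k≥1} ∑_{w∈𝒜^k} a(wy) 𝕁(wx)^s`. -/
noncomputable def zetaMinus [Fintype 𝒜] (J : Omega 𝒜 → ℝ) (a : Omega 𝒜 → ℂ) (x y : Omega 𝒜)
    (s : ℝ) : ℂ :=
  ∑' k : ℕ, ∑ w : Fin (k + 1) → 𝒜, a (concat w y) * (((JBirk J (k + 1) w x) ^ s : ℝ) : ℂ)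

/-- `L_{log J}^* μ = μ`, i.e. `μ` is a `g`-measure of `J`, tested against continuous functions. -/
def IsGMeasure [Fintype 𝒜] [TopologicalSpace 𝒜] [MeasurableSpace 𝒜]
    (J : Omega 𝒜 → ℝ) (μ : Measure (Omega 𝒜)) : Prop :=
  IsProbabilityMeasure μ ∧
    ∀ φ : Omega 𝒜 → ℂ, Continuous φ →
      ∫ x, ruelle (fun z => Real.log (J z)) φ x ∂μ = ∫ x, φ x ∂μ

/-- The cylinder set determined by a finite word. -/
def cyl {k : ℕ} (w : Fin k → 𝒜) : Set (Omega 𝒜) := {x | ∀ i : Fin k, x (i : ℕ) = w i}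

/-- Entropy of the partition into cylinders of length `n`. -/
noncomputable def blockEntropy [Fintype 𝒜] [MeasurableSpace 𝒜] (μ : Measure (Omega 𝒜))
    (n : ℕ) : ℝ :=
  ∑ w : Fin n → 𝒜, Real.negMulLog (μ (cyl w)).toReal

/-- Kolmogorov–Sinai entropy `h_μ(σ)` of a shift-invariant measure, computed through the
generating partition into cylinders: `h_μ(σ) = lim_n H_n/n = inf_{n≥1} H_n/n`. -/
noncomputable def KSentropy [Fintype 𝒜] [MeasurableSpace 𝒜] (μ : Measure (Omega 𝒜)) : ℝ :=
  ⨅ n : ℕ, blockEntropy μ (n + 1) / (n + 1)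

/-- Topological pressure `P(f) = sup {h_μ(σ) + ∫ f dμ}` over shift-invariant Borel
probability measures. -/
noncomputable def pressure [Fintype 𝒜] [MeasurableSpace 𝒜] (f : Omega 𝒜 → ℝ) : ℝ :=
  sSup {r : ℝ | ∃ μ : Measure (Omega 𝒜), IsProbabilityMeasure μ ∧
    Measure.map shift μ = μ ∧ r = KSentropy μ + ∫ x, f x ∂μ}

/-- `μ` is an equilibrium state of `f`. -/
def IsEquilibrium [Fintype 𝒜] [MeasurableSpace 𝒜] (f : Omega 𝒜 → ℝ)
    (μ : Measure (Omega 𝒜)) : Prop :=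
  IsProbabilityMeasure μ ∧ Measure.map shift μ = μ ∧
    KSentropy μ + ∫ x, f x ∂μ = pressure f

/-- The Walters class `W(Ω,σ)`:
`sup_{n≥1} sup_{w∈𝒜^n} |S_n(f)(wx) − S_n(f)(wy)| → 0` as `d(x,y) → 0`. -/
def WaltersClass [TopologicalSpace 𝒜] (f : Omega 𝒜 → ℝ) : Prop :=
  Continuous f ∧ ∀ ε > (0:ℝ), ∃ δ > (0:ℝ), ∀ x y : Omega 𝒜, dOmega x y < δ →
    ∀ (n : ℕ) (w : Fin n → 𝒜),
      |birkhoff f n (concat w x) - birkhoff f n (concat w y)| ≤ ε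

/-- The set `W*` of finite (nonempty) words over `𝒜`. -/
def Words (𝒜 : Type) : Type := Σ k : ℕ, Fin (k + 1) → 𝒜

end GS
namespace GS


variable {𝒜 : Type}

lemma cons_zero_shift (x : Omega 𝒜) : cons (x 0) (shift x) = x := by
  funext n; cases n <;> rfl

lemma shift_concat {k : ℕ} (w : Fin (k + 1) → 𝒜) (x : Omega 𝒜) :
    shift (concat w x) = concat (fun i : Fin k => w i.succ) x := by
  funext n
  simp only [shift, concat]
  by_cases h : n < k
  · rw [dif_pos h, dif_pos (by omega : n + 1 < k + 1)]
    exact congrArg w (Fin.ext rfl)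
  · rw [dif_neg h, dif_neg (by omega : ¬ n + 1 < k + 1)]
    congr 1
    omega

lemma concat_cons {k : ℕ} (w : Fin (k + 1) → 𝒜) (x : Omega 𝒜) :
    concat w x = cons (w 0) (concat (fun i : Fin k => w i.succ) x) := by
  funext n
  cases n with
  | zero =>
    show concat w x 0 = w 0
    simp only [concat]
    rw [dif_pos (by omega : 0 < k + 1)]
    congr 1
  | succ n =>
    show concat w x (n + 1) = concat (fun i : Fin k => w i.succ) x n
    simp only [concat]
    by_cases h : n < k
    · rw [dif_pos h, dif_pos (by omega : n + 1 < k + 1)]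
      exact congrArg w (Fin.ext rfl)
    · rw [dif_neg h, dif_neg (by omega : ¬ n + 1 < k + 1)]
      congr 1
      omega

lemma birkhoff_succ (f : Omega 𝒜 → ℝ) (k : ℕ) (z : Omega 𝒜) :
    birkhoff f (k + 1) z = f z + birkhoff f k (shift z) := by
  unfold birkhoff
  rw [Finset.sum_range_succ']
  simp only [Function.iterate_succ_apply, Function.iterate_zero_apply]
  ring

lemma JBirk_pos (J : Omega 𝒜 → ℝ) {k : ℕ} (w : Fin k → 𝒜) (x : Omega 𝒜) :
    0 < JBirk J k w x := Real.exp_pos _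

lemma JBirk_succ (J : Omega 𝒜 → ℝ) (hJpos : ∀ z, 0 < J z) {k : ℕ}
    (w : Fin (k + 1) → 𝒜) (x : Omega 𝒜) :
    JBirk J (k + 1) w x = J (concat w x) * JBirk J k (fun i => w i.succ) x := by
  unfold JBirk
  rw [birkhoff_succ, Real.exp_add, Real.exp_log (hJpos _), shift_concat]

lemma sum_JBirk [Fintype 𝒜] {J : Omega 𝒜 → ℝ} (hJpos : ∀ z, 0 < J z)
    (hJsum : ∀ x : Omega 𝒜, ∑ q : 𝒜, J (cons q x) = 1) :
    ∀ (k : ℕ) (x : Omega 𝒜), ∑ w : Fin k → 𝒜, JBirk J k w x = 1 := by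
  intro k
  induction k with
  | zero => intro x; simp [JBirk, birkhoff]
  | succ k ih =>
    intro x
    rw [← (Fin.consEquiv (fun _ : Fin (k + 1) => 𝒜)).sum_comp
      (fun w => JBirk J (k + 1) w x)]
    have hterm : ∀ p : 𝒜 × (Fin k → 𝒜),
        JBirk J (k + 1) ((Fin.consEquiv (fun _ : Fin (k + 1) => 𝒜)) p) x
          = J (cons p.1 (concat p.2 x)) * JBirk J k p.2 x := by
      rintro ⟨q, w'⟩
      have h1 : ((Fin.consEquiv (fun _ : Fin (k + 1) => 𝒜)) (q, w')) = Fin.cons q w' := rfl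
      rw [h1, JBirk_succ J hJpos]
      have h2 : (fun i : Fin k => (Fin.cons q w' : Fin (k+1) → 𝒜) i.succ) = w' := by
        funext i; simp
      have h3 : concat (Fin.cons q w' : Fin (k+1) → 𝒜) x = cons q (concat w' x) := by
        rw [concat_cons, h2, Fin.cons_zero]
      rw [h2, h3]
    rw [Finset.sum_congr rfl (fun p _ => hterm p), Fintype.sum_prod_type, Finset.sum_comm]
    have hrow : ∀ w' : Fin k → 𝒜,
        ∑ q : 𝒜, J (cons q (concat w' x)) * JBirk J k w' x = JBirk J k w' x := by
      intro w'
      rw [← Finset.sum_mul, hJsum, one_mul]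
    rw [Finset.sum_congr rfl (fun w' _ => hrow w')]
    exact ih x

lemma JBirk_le {J : Omega 𝒜 → ℝ} (hJpos : ∀ z, 0 < J z) {c : ℝ} (hc : ∀ z, J z ≤ c) :
    ∀ (k : ℕ) (w : Fin k → 𝒜) (x : Omega 𝒜), JBirk J k w x ≤ c ^ k := by
  intro k
  induction k with
  | zero => intro w x; simp [JBirk, birkhoff]
  | succ k ih =>
    intro w x
    rw [JBirk_succ J hJpos, pow_succ, mul_comm (c ^ k) c]
    exact mul_le_mul (hc _) (ih _ _) (JBirk_pos J _ x).le
      (le_trans (hJpos (concat w x)).le (hc _))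

lemma dOmega_nonneg (x y : Omega 𝒜) : 0 ≤ dOmega x y := by
  unfold dOmega; split
  · exact le_refl 0
  · positivity

lemma dOmega_pos {x y : Omega 𝒜} (h : x ≠ y) : 0 < dOmega x y := by
  unfold dOmega; rw [if_neg h]; positivity

lemma dOmega_le_one (x y : Omega 𝒜) : dOmega x y ≤ 1 := by
  unfold dOmega; split
  · norm_num
  · exact pow_le_one₀ (by norm_num) (by norm_num)

lemma dOmega_concat {k : ℕ} (w : Fin k → 𝒜) (x y : Omega 𝒜) :
    dOmega (concat w x) (concat w y) = (1 / 2 : ℝ) ^ k * dOmega x y := by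
  by_cases hxy : x = y
  · subst hxy; simp [dOmega]
  · have hS : {n : ℕ | x n ≠ y n}.Nonempty := Function.ne_iff.mp hxy
    have hmem : ∀ n, concat w x n ≠ concat w y n ↔ k ≤ n ∧ x (n - k) ≠ y (n - k) := by
      intro n
      simp only [concat]
      by_cases h : n < k
      · rw [dif_pos h, dif_pos h]
        constructor
        · intro hc; exact absurd rfl hc
        · rintro ⟨hk, -⟩; omega
      · rw [dif_neg h, dif_neg h]
        exact ⟨fun hc => ⟨by omega, hc⟩, fun hc => hc.2⟩
    set m := sInf {n : ℕ | x n ≠ y n} with hm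
    have hmS : x m ≠ y m := Nat.sInf_mem hS
    have hkm : concat w x (k + m) ≠ concat w y (k + m) :=
      (hmem _).mpr ⟨Nat.le_add_right _ _, by rwa [Nat.add_sub_cancel_left]⟩
    have hne : concat w x ≠ concat w y := fun hEq => hkm (congrFun hEq _)
    have hS' : {n : ℕ | concat w x n ≠ concat w y n}.Nonempty := ⟨k + m, hkm⟩
    have h1 : sInf {n : ℕ | concat w x n ≠ concat w y n} = k + m := by
      apply le_antisymm
      · exact Nat.sInf_le hkm
      · obtain ⟨hk, hc⟩ := (hmem _).mp (Nat.sInf_mem hS')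
        have h2 : m ≤ sInf {n : ℕ | concat w x n ≠ concat w y n} - k := Nat.sInf_le hc
        omega
    rw [dOmega, dOmega, if_neg hne, if_neg hxy, h1, ← hm,
      show k + m + 1 = k + (m + 1) by omega, pow_add]

lemma holder_bound [Fintype 𝒜] (hcard : 2 ≤ Fintype.card 𝒜) {α : ℝ} (hα : 0 < α)
    {a : Omega 𝒜 → ℂ} (ha : IsHolderW α a) :
    0 ≤ HolConst α a ∧
      ∀ z w : Omega 𝒜, ‖a z - a w‖ ≤ HolConst α a * dOmega z w ^ α := by
  obtain ⟨C, hC⟩ := ha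
  obtain ⟨q0, q1, hq⟩ := Fintype.exists_pair_of_one_lt_card (α := 𝒜) (by omega)
  have hpts : ((fun _ => q0) : Omega 𝒜) ≠ (fun _ => q1) := fun h => hq (congrFun h 0)
  have hHdef : HolConst α a =
      sSup {r : ℝ | ∃ x y : Omega 𝒜, x ≠ y ∧ r = ‖a x - a y‖ / (dOmega x y) ^ α} := rfl
  set Sset := {r : ℝ | ∃ x y : Omega 𝒜, x ≠ y ∧ r = ‖a x - a y‖ / (dOmega x y) ^ α}
    with hSset
  have hbdd : BddAbove Sset := by
    refine ⟨C, ?_⟩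
    rintro r ⟨u, v, huv, rfl⟩
    have hd : 0 < dOmega u v ^ α := Real.rpow_pos_of_pos (dOmega_pos huv) α
    exact (div_le_iff₀ hd).mpr (hC u v)
  have hmem0 : (‖a (fun _ => q0) - a (fun _ => q1)‖ /
      (dOmega ((fun _ => q0) : Omega 𝒜) (fun _ => q1)) ^ α) ∈ Sset :=
    ⟨_, _, hpts, rfl⟩
  have hH0 : 0 ≤ HolConst α a := by
    rw [hHdef]
    refine le_trans ?_ (le_csSup hbdd hmem0)
    have hd : 0 < (dOmega ((fun _ => q0) : Omega 𝒜) (fun _ => q1)) ^ α :=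
      Real.rpow_pos_of_pos (dOmega_pos hpts) α
    positivity
  refine ⟨hH0, fun z w => ?_⟩
  by_cases hzw : z = w
  · subst hzw
    simp [dOmega, Real.zero_rpow (ne_of_gt hα)]
  · have hd : 0 < dOmega z w ^ α := Real.rpow_pos_of_pos (dOmega_pos hzw) α
    have hmem : ‖a z - a w‖ / dOmega z w ^ α ∈ Sset := ⟨z, w, hzw, rfl⟩
    have hle : ‖a z - a w‖ / dOmega z w ^ α ≤ HolConst α a := by
      rw [hHdef]; exact le_csSup hbdd hmem
    calc ‖a z - a w‖ = ‖a z - a w‖ / dOmega z w ^ α * dOmega z w ^ α := by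
          field_simp
      _ ≤ HolConst α a * dOmega z w ^ α := mul_le_mul_of_nonneg_right hle hd.le

lemma exists_J_bound [Fintype 𝒜] [TopologicalSpace 𝒜] [DiscreteTopology 𝒜]
    (hcard : 2 ≤ Fintype.card 𝒜) {J : Omega 𝒜 → ℝ} (hJ : IsGFunction J) :
    ∃ c : ℝ, 0 < c ∧ c < 1 ∧ ∀ z, J z ≤ c := by
  obtain ⟨hJc, hJpos, hJsum⟩ := hJ
  have hA : Nonempty 𝒜 := Fintype.card_pos_iff.mp (by omega)
  obtain ⟨x₀, -, hx₀⟩ := isCompact_univ.exists_isMaxOn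
    (Set.univ_nonempty (α := Omega 𝒜)) hJc.continuousOn
  refine ⟨J x₀, hJpos _, ?_, fun z => hx₀ (Set.mem_univ z)⟩
  obtain ⟨q', hq'⟩ := Fintype.exists_ne_of_one_lt_card (by omega) (x₀ 0)
  have key : J (cons (x₀ 0) (shift x₀)) + J (cons q' (shift x₀)) ≤ 1 := by
    rw [← hJsum (shift x₀)]
    have h := Finset.sum_le_sum_of_subset_of_nonneg
      (Finset.subset_univ ({x₀ 0, q'} : Finset 𝒜))
      (fun i _ _ => (hJpos (cons i (shift x₀))).le)
    rwa [Finset.sum_pair (Ne.symm hq')] at h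
  rw [cons_zero_shift] at key
  have := hJpos (cons q' (shift x₀))
  linarith

lemma pow_rpow_comm {b : ℝ} (hb : 0 ≤ b) (n : ℕ) (α : ℝ) :
    (b ^ n) ^ α = (b ^ α) ^ n := by
  rw [← Real.rpow_natCast b n, ← Real.rpow_mul hb, mul_comm, Real.rpow_mul hb,
    Real.rpow_natCast]

/-- For a `g`-function `J` and `α`-Hölder `a`, the series `ζ₊(s)` and `ζ₋(s)` converge
absolutely for every `s > 1`, `|ζ₊(s) − ζ₋(s)| ≤ (2^α − 1)⁻¹ Hol_α(a) d(x,y)^α`, and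
consequently `(s−1)[ζ₊(s) − ζ₋(s)] → 0` as `s → 1⁺`. -/
theorem statement3 {𝒜 : Type} [Fintype 𝒜] [TopologicalSpace 𝒜] [DiscreteTopology 𝒜]
    (hcard : 2 ≤ Fintype.card 𝒜)
    (α : ℝ) (hα : α ∈ Set.Ioo (0 : ℝ) 1)
    (J : Omega 𝒜 → ℝ) (hJ : IsGFunction J)
    (a : Omega 𝒜 → ℂ) (ha : IsHolderW α a) (x y : Omega 𝒜) :
    (∀ s : ℝ, 1 < s →
      Summable (fun k : ℕ =>
          ∑ w : Fin (k + 1) → 𝒜, ‖a (concat w x) * (((JBirk J (k + 1) w x) ^ s : ℝ) : ℂ)‖) ∧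
      Summable (fun k : ℕ =>
          ∑ w : Fin (k + 1) → 𝒜, ‖a (concat w y) * (((JBirk J (k + 1) w x) ^ s : ℝ) : ℂ)‖) ∧
      ‖zetaPlus J a x s - zetaMinus J a x y s‖
        ≤ ((2 : ℝ) ^ α - 1)⁻¹ * HolConst α a * (dOmega x y) ^ α) ∧
    Tendsto (fun s : ℝ => ((s : ℂ) - 1) * (zetaPlus J a x s - zetaMinus J a x y s))
      (𝓝[>] (1 : ℝ)) (𝓝 0) := by

  obtain ⟨hα0, hα1⟩ := hα
  obtain ⟨c, hc0, hc1, hcle⟩ := exists_J_bound hcard hJ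
  obtain ⟨hJc, hJpos, hJsum⟩ := hJ
  have hsumJ := sum_JBirk hJpos hJsum
  have hJle := JBirk_le hJpos hcle
  obtain ⟨hH0, hHol⟩ := holder_bound hcard hα0 ha
  have hd0 : 0 ≤ dOmega x y := dOmega_nonneg x y
  have hu1 : 1 < (2 : ℝ) ^ α :=
    (Real.one_lt_rpow_iff_of_pos (by norm_num)).mpr (Or.inl ⟨by norm_num, hα0⟩)
  have htu : ((1 : ℝ) / 2) ^ α = ((2 : ℝ) ^ α)⁻¹ := by
    rw [one_div, Real.inv_rpow (by norm_num : (0:ℝ) ≤ 2)]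
  have ht0 : 0 ≤ ((1 : ℝ) / 2) ^ α := Real.rpow_nonneg (by norm_num) α
  have ht1 : ((1 : ℝ) / 2) ^ α < 1 := Real.rpow_lt_one (by norm_num) (by norm_num) hα0
  have haBound : ∀ z : Omega 𝒜, ‖a z‖ ≤ ‖a x‖ + HolConst α a := by
    intro z
    have h1 := hHol z x
    have h2 : dOmega z x ^ α ≤ 1 :=
      Real.rpow_le_one (dOmega_nonneg _ _) (dOmega_le_one _ _) hα0.le
    have h3 : HolConst α a * dOmega z x ^ α ≤ HolConst α a * 1 :=
      mul_le_mul_of_nonneg_left h2 hH0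
    have h4 := norm_sub_norm_le (a z) (a x)
    linarith
  have hA0 : 0 ≤ ‖a x‖ + HolConst α a := by
    have := norm_nonneg (a x); linarith
  have main : ∀ s : ℝ, 1 < s →
      Summable (fun k : ℕ =>
          ∑ w : Fin (k + 1) → 𝒜, ‖a (concat w x) * (((JBirk J (k + 1) w x) ^ s : ℝ) : ℂ)‖) ∧
      Summable (fun k : ℕ =>
          ∑ w : Fin (k + 1) → 𝒜, ‖a (concat w y) * (((JBirk J (k + 1) w x) ^ s : ℝ) : ℂ)‖) ∧
      ‖zetaPlus J a x s - zetaMinus J a x y s‖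
        ≤ ((2 : ℝ) ^ α - 1)⁻¹ * HolConst α a * (dOmega x y) ^ α := by
    intro s hs
    set ρ := c ^ (s - 1) with hρ
    have hρ0 : 0 ≤ ρ := Real.rpow_nonneg hc0.le _
    have hρ1 : ρ < 1 := Real.rpow_lt_one hc0.le hc1 (by linarith)
    have hnorm : ∀ (b : ℂ) (k : ℕ) (w : Fin (k + 1) → 𝒜),
        ‖b * (((JBirk J (k + 1) w x) ^ s : ℝ) : ℂ)‖
          = ‖b‖ * (JBirk J (k + 1) w x) ^ s := by
      intro b k w
      rw [norm_mul, Complex.norm_real, Real.norm_eq_abs,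
        abs_of_nonneg (Real.rpow_nonneg (JBirk_pos J w x).le s)]
    have hJs : ∀ (k : ℕ) (w : Fin k → 𝒜),
        (JBirk J k w x) ^ s ≤ ρ ^ k * JBirk J k w x := by
      intro k w
      have hpos := JBirk_pos J w x
      have hsplit : (JBirk J k w x) ^ s
          = (JBirk J k w x) ^ (s - 1) * JBirk J k w x := by
        nth_rewrite 3 [← Real.rpow_one (JBirk J k w x)]
        rw [← Real.rpow_add hpos]
        norm_num
      rw [hsplit]
      have h1 : (JBirk J k w x) ^ (s - 1) ≤ ((c : ℝ) ^ k) ^ (s - 1) :=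
        Real.rpow_le_rpow hpos.le (hJle k w x) (by linarith)
      have h2 : ((c : ℝ) ^ k) ^ (s - 1) = ρ ^ k := pow_rpow_comm hc0.le k (s - 1)
      exact mul_le_mul_of_nonneg_right (h2 ▸ h1) hpos.le
    have hJs_sum : ∀ k : ℕ, ∑ w : Fin k → 𝒜, (JBirk J k w x) ^ s ≤ ρ ^ k := by
      intro k
      calc ∑ w : Fin k → 𝒜, (JBirk J k w x) ^ s
          ≤ ∑ w : Fin k → 𝒜, ρ ^ k * JBirk J k w x :=
            Finset.sum_le_sum (fun w _ => hJs k w)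
        _ = ρ ^ k * ∑ w : Fin k → 𝒜, JBirk J k w x := by rw [Finset.mul_sum]
        _ = ρ ^ k := by rw [hsumJ k x, mul_one]
    have key_sum : ∀ z : Omega 𝒜, Summable (fun k : ℕ =>
        ∑ w : Fin (k + 1) → 𝒜,
          ‖a (concat w z) * (((JBirk J (k + 1) w x) ^ s : ℝ) : ℂ)‖) := by
      intro z
      have hgeo : Summable (fun k : ℕ => ρ ^ k) := summable_geometric_of_lt_one hρ0 hρ1
      have hgeo2 : Summable (fun k : ℕ => (‖a x‖ + HolConst α a) * ρ ^ (k + 1)) := by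
        refine ((hgeo.mul_left ((‖a x‖ + HolConst α a) * ρ)).congr fun k => ?_)
        ring
      refine Summable.of_nonneg_of_le
        (fun k => Finset.sum_nonneg fun w _ => norm_nonneg _) (fun k => ?_) hgeo2
      calc ∑ w : Fin (k + 1) → 𝒜, ‖a (concat w z) * (((JBirk J (k + 1) w x) ^ s : ℝ) : ℂ)‖
          = ∑ w : Fin (k + 1) → 𝒜, ‖a (concat w z)‖ * (JBirk J (k + 1) w x) ^ s :=
            Finset.sum_congr rfl fun w _ => hnorm _ k w
        _ ≤ ∑ w : Fin (k + 1) → 𝒜, (‖a x‖ + HolConst α a) * (JBirk J (k + 1) w x) ^ s :=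
            Finset.sum_le_sum fun w _ => mul_le_mul_of_nonneg_right (haBound _)
              (Real.rpow_nonneg (JBirk_pos J w x).le s)
        _ = (‖a x‖ + HolConst α a) * ∑ w : Fin (k + 1) → 𝒜, (JBirk J (k + 1) w x) ^ s := by
            rw [Finset.mul_sum]
        _ ≤ (‖a x‖ + HolConst α a) * ρ ^ (k + 1) :=
            mul_le_mul_of_nonneg_left (hJs_sum (k + 1)) hA0
    refine ⟨key_sum x, key_sum y, ?_⟩
    have hfx : Summable (fun k : ℕ =>
        ∑ w : Fin (k + 1) → 𝒜, a (concat w x) * (((JBirk J (k + 1) w x) ^ s : ℝ) : ℂ)) :=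
      Summable.of_norm_bounded (key_sum x) (fun k => norm_sum_le _ _)
    have hfy : Summable (fun k : ℕ =>
        ∑ w : Fin (k + 1) → 𝒜, a (concat w y) * (((JBirk J (k + 1) w x) ^ s : ℝ) : ℂ)) :=
      Summable.of_norm_bounded (key_sum y) (fun k => norm_sum_le _ _)
    rw [zetaPlus, zetaMinus, ← Summable.tsum_sub hfx hfy]
    have hdiff : ∀ k : ℕ,
        ‖(∑ w : Fin (k + 1) → 𝒜, a (concat w x) * (((JBirk J (k + 1) w x) ^ s : ℝ) : ℂ))
          - ∑ w : Fin (k + 1) → 𝒜, a (concat w y) * (((JBirk J (k + 1) w x) ^ s : ℝ) : ℂ)‖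
          ≤ HolConst α a * dOmega x y ^ α * ((1 : ℝ) / 2) ^ α
              * (((1 : ℝ) / 2) ^ α) ^ k := by
      intro k
      rw [← Finset.sum_sub_distrib]
      have hfact : ∀ w ∈ (Finset.univ : Finset (Fin (k + 1) → 𝒜)),
          a (concat w x) * (((JBirk J (k + 1) w x) ^ s : ℝ) : ℂ)
            - a (concat w y) * (((JBirk J (k + 1) w x) ^ s : ℝ) : ℂ)
          = (a (concat w x) - a (concat w y)) * (((JBirk J (k + 1) w x) ^ s : ℝ) : ℂ) :=
        fun w _ => (sub_mul _ _ _).symm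
      rw [Finset.sum_congr rfl hfact]
      refine le_trans (norm_sum_le _ _) ?_
      have hterm : ∀ w : Fin (k + 1) → 𝒜,
          ‖(a (concat w x) - a (concat w y)) * (((JBirk J (k + 1) w x) ^ s : ℝ) : ℂ)‖
          ≤ (HolConst α a * dOmega x y ^ α * ((1 : ℝ) / 2) ^ α * (((1 : ℝ) / 2) ^ α) ^ k)
              * JBirk J (k + 1) w x := by
        intro w
        rw [hnorm]
        have hJb_pos := JBirk_pos J w x
        have hJb_le1 : JBirk J (k + 1) w x ≤ 1 :=
          le_trans (hJle (k + 1) w x) (pow_le_one₀ hc0.le hc1.le)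
        have h2 : (JBirk J (k + 1) w x) ^ s ≤ JBirk J (k + 1) w x := by
          nth_rewrite 2 [← Real.rpow_one (JBirk J (k + 1) w x)]
          exact Real.rpow_le_rpow_of_exponent_ge hJb_pos hJb_le1 hs.le
        have h1 : ‖a (concat w x) - a (concat w y)‖
            ≤ HolConst α a * dOmega x y ^ α * ((1 : ℝ) / 2) ^ α
                * (((1 : ℝ) / 2) ^ α) ^ k := by
          refine le_trans (hHol _ _) ?_
          rw [dOmega_concat, Real.mul_rpow (by positivity) hd0,
            pow_rpow_comm (by norm_num : (0:ℝ) ≤ 1/2) (k + 1) α, pow_succ]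
          refine le_of_eq ?_
          ring
        have hKnn : 0 ≤ HolConst α a * dOmega x y ^ α * ((1 : ℝ) / 2) ^ α
            * (((1 : ℝ) / 2) ^ α) ^ k := by positivity
        exact mul_le_mul h1 h2 (Real.rpow_nonneg hJb_pos.le s) hKnn
      calc ∑ w : Fin (k + 1) → 𝒜,
            ‖(a (concat w x) - a (concat w y)) * (((JBirk J (k + 1) w x) ^ s : ℝ) : ℂ)‖
          ≤ ∑ w : Fin (k + 1) → 𝒜,
            (HolConst α a * dOmega x y ^ α * ((1 : ℝ) / 2) ^ α * (((1 : ℝ) / 2) ^ α) ^ k)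
              * JBirk J (k + 1) w x := Finset.sum_le_sum fun w _ => hterm w
        _ = HolConst α a * dOmega x y ^ α * ((1 : ℝ) / 2) ^ α
              * (((1 : ℝ) / 2) ^ α) ^ k := by
            rw [← Finset.mul_sum, hsumJ, mul_one]
    have hgs : HasSum (fun k : ℕ =>
        HolConst α a * dOmega x y ^ α * ((1 : ℝ) / 2) ^ α * (((1 : ℝ) / 2) ^ α) ^ k)
        (((2 : ℝ) ^ α - 1)⁻¹ * HolConst α a * dOmega x y ^ α) := by
      have h0 := hasSum_geometric_of_lt_one ht0 ht1
      have h1 := h0.mul_left (HolConst α a * dOmega x y ^ α * ((1 : ℝ) / 2) ^ α)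
      have heq : HolConst α a * dOmega x y ^ α * ((1 : ℝ) / 2) ^ α
          * (1 - ((1 : ℝ) / 2) ^ α)⁻¹
          = ((2 : ℝ) ^ α - 1)⁻¹ * HolConst α a * dOmega x y ^ α := by
        rw [htu]
        have hu0 : (0:ℝ) < (2 : ℝ) ^ α := lt_trans one_pos hu1
        have hu0' : (2 : ℝ) ^ α ≠ 0 := ne_of_gt hu0
        have hum1 : (2 : ℝ) ^ α - 1 ≠ 0 := ne_of_gt (by linarith)
        have h1t : 1 - ((2 : ℝ) ^ α)⁻¹ = ((2 : ℝ) ^ α - 1) / (2 : ℝ) ^ α := by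
          field_simp
        rw [h1t]
        field_simp
      rw [heq] at h1
      exact h1
    exact tsum_of_norm_bounded hgs hdiff
  refine ⟨main, ?_⟩
  have hB0 : 0 ≤ ((2 : ℝ) ^ α - 1)⁻¹ * HolConst α a * dOmega x y ^ α := by
    have : (0:ℝ) ≤ ((2 : ℝ) ^ α - 1)⁻¹ := inv_nonneg.mpr (by linarith)
    positivity
  apply squeeze_zero_norm'
    (a := fun s : ℝ => |s - 1| * (((2 : ℝ) ^ α - 1)⁻¹ * HolConst α a * dOmega x y ^ α))
  · filter_upwards [self_mem_nhdsWithin] with s hs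
    have hs1 : 1 < s := hs
    rw [norm_mul]
    have hns : ‖(s : ℂ) - 1‖ = |s - 1| := by
      rw [show ((s : ℂ) - 1) = ((s - 1 : ℝ) : ℂ) by push_cast; ring,
        Complex.norm_real, Real.norm_eq_abs]
    rw [hns]
    exact mul_le_mul_of_nonneg_left ((main s hs1).2.2) (abs_nonneg _)
  · have hcont : Continuous (fun s : ℝ =>
        |s - 1| * (((2 : ℝ) ^ α - 1)⁻¹ * HolConst α a * dOmega x y ^ α)) :=
      ((continuous_id.sub continuous_const).abs).mul continuous_const
    have := (hcont.tendsto 1).mono_left (nhdsWithin_le_nhds (s := Set.Ioi (1:ℝ)))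
    simpa using this


end GS
end

section
/- Let γ>2, let g be the Hofbauer potential on Ω={0,1}^ℕ, and fix z∈C₀. Then for every s>1 the series Σ_{n≥1} (L_{sg}^n 1_{[1]})(z) converges and equals (ζ(γs) − 1) / (1 − ζ(γs) ζ(γ)^{−s}). -/
open Real MeasureTheory Filter Topology Set

open scoped Classical

namespace GS

/-- The Riemann zeta function `ζ(γ) = ∑_{n≥1} n^{-γ}` (for real `γ > 1`). -/
noncomputable def zetaR (γ : ℝ) : ℝ := ∑' n : ℕ, ((n : ℝ) + 1) ^ (-γ)

/-- The Hofbauer potential on `Ω = {0,1}^ℕ`: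
`g = −log ζ(γ)` on `C₀ = [0]`, `g = −γ log((k+1)/k)` on `C_k = [1⋯10]` (`k ≥ 1`), and
`g((1,1,1,…)) = 0`. -/
noncomputable def hof (γ : ℝ) (x : Omega (Fin 2)) : ℝ :=
  if h : ∀ n, x n = 1 then 0
  else
    let k := Nat.find (not_forall.mp h)
    if k = 0 then -Real.log (zetaR γ) else -γ * Real.log (((k : ℝ) + 1) / (k : ℝ))

/-- The indicator function of the cylinder `[1] = {x : x₁ = 1}`. -/
noncomputable def indOne (x : Omega (Fin 2)) : ℝ := if x 0 = 1 then 1 else 0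

/-- `L_s^n = (L_{s g}^n 1_{[1]})(z)` for the Hofbauer potential `g`. -/
noncomputable def LsHof (γ s : ℝ) (z : Omega (Fin 2)) (n : ℕ) : ℝ :=
  (ruelle (fun x => s * hof γ x))^[n] indOne z

/-- `(L_{s g}^n 𝟏)(z)` for the Hofbauer potential `g`. -/
noncomputable def MsHof (γ s : ℝ) (z : Omega (Fin 2)) (n : ℕ) : ℝ :=
  (ruelle (fun x => s * hof γ x))^[n] (fun _ => (1 : ℝ)) z

/-- `f'(1)` for `f(s) = ζ(γs) ζ(γ)^{−s}`:
`f′(1) = (γ ζ′(γ) − ζ(γ) log ζ(γ))/ζ(γ)`. -/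
noncomputable def fprime (γ : ℝ) : ℝ :=
  (γ * deriv zetaR γ - zetaR γ * Real.log (zetaR γ)) / zetaR γ

end GS
namespace GS

/-! ### Auxiliary development for Statement 10 -/

/-- `a = ζ(γ)^{-s}`. -/
noncomputable def aH (γ s : ℝ) : ℝ := zetaR γ ^ (-s)

/-- `β_j = (j+1)^{-t}`. -/
noncomputable def betaH (t : ℝ) (j : ℕ) : ℝ := ((j : ℝ) + 1) ^ (-t)

/-- `c_m = ((m+2)/(m+1))^{-γ s}`. -/
noncomputable def cH (γ s : ℝ) (m : ℕ) : ℝ := (((m : ℝ) + 2) / ((m : ℝ) + 1)) ^ (-(γ * s))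

/-- `ρ_{m,j} = ((m+j+1)/(m+1))^{-t}`. -/
noncomputable def rhoH (t : ℝ) (m j : ℕ) : ℝ :=
  (((m : ℝ) + (j : ℝ) + 1) / ((m : ℝ) + 1)) ^ (-t)

/-- The scalar recursion encoding the action of `L_{sg}` on functions of the
initial run-length. -/
noncomputable def uH (γ s : ℝ) : ℕ → ℕ → ℝ
  | 0, m => if m = 0 then 0 else 1
  | n + 1, m => aH γ s * uH γ s n 0 + cH γ s m * uH γ s n (m + 1)

/-- `x` starts with exactly `m` ones followed by a zero. -/
def FZ (x : Omega (Fin 2)) (m : ℕ) : Prop := (∀ i, i < m → x i = 1) ∧ x m = 0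

lemma zetaR_eq (t : ℝ) : zetaR t = ∑' n, betaH t n := rfl

lemma betaH_zero (t : ℝ) : betaH t 0 = 1 := by simp [betaH]

lemma betaH_nonneg (t : ℝ) (j : ℕ) : 0 ≤ betaH t j := by
  unfold betaH; positivity

lemma summable_betaH {t : ℝ} (ht : 1 < t) : Summable (betaH t) := by
  have h := Real.summable_one_div_nat_rpow.mpr ht
  refine ((summable_nat_add_iff 1).mpr h).congr fun n => ?_
  have hpos : (0 : ℝ) ≤ (n : ℝ) + 1 := by positivity
  push_cast
  unfold betaH
  rw [Real.rpow_neg hpos, one_div]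

lemma one_le_zetaR {t : ℝ} (ht : 1 < t) : 1 ≤ zetaR t := by
  rw [zetaR_eq]
  calc (1 : ℝ) = betaH t 0 := (betaH_zero t).symm
    _ ≤ ∑' n, betaH t n := Summable.le_tsum (summable_betaH ht) 0 fun i _ => betaH_nonneg t i

lemma zetaR_pos {t : ℝ} (ht : 1 < t) : 0 < zetaR t := lt_of_lt_of_le one_pos (one_le_zetaR ht)

lemma aH_nonneg {γ : ℝ} (hγ : 1 < γ) (s : ℝ) : 0 ≤ aH γ s :=
  Real.rpow_nonneg (zetaR_pos hγ).le _

lemma cH_nonneg (γ s : ℝ) (m : ℕ) : 0 ≤ cH γ s m := by unfold cH; positivity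

lemma uH_nonneg {γ : ℝ} (hγ : 1 < γ) (s : ℝ) : ∀ n m, 0 ≤ uH γ s n m := by
  intro n
  induction n with
  | zero => intro m; unfold uH; split <;> norm_num
  | succ n ih =>
    intro m
    have := aH_nonneg hγ s
    have := cH_nonneg γ s m
    have := ih 0
    have := ih (m + 1)
    unfold uH
    positivity

lemma hof_eq {γ : ℝ} {x : Omega (Fin 2)} {m : ℕ} (h : FZ x m) :
    hof γ x = if m = 0 then -Real.log (zetaR γ)
      else -γ * Real.log (((m : ℝ) + 1) / (m : ℝ)) := by
  have hne : ¬ ∀ n, x n = 1 := by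
    intro hall
    exact absurd (h.2 ▸ hall m) (by decide)
  unfold hof
  rw [dif_neg hne]
  have hfind : Nat.find (not_forall.mp hne) = m := by
    rw [Nat.find_eq_iff]
    constructor
    · simp [h.2]
    · intro i hi
      simp [h.1 i hi]
  simp only [hfind]

lemma FZ_cons_zero {x : Omega (Fin 2)} {m : ℕ} (_h : FZ x m) : FZ (cons 0 x) 0 :=
  ⟨fun i hi => absurd hi (Nat.not_lt_zero i), rfl⟩

lemma FZ_cons_one {x : Omega (Fin 2)} {m : ℕ} (h : FZ x m) : FZ (cons 1 x) (m + 1) := by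
  refine ⟨fun i hi => ?_, h.2⟩
  cases i with
  | zero => rfl
  | succ j => exact h.1 j (Nat.lt_of_succ_lt_succ hi)

lemma ruelle_step {γ : ℝ} (hγ : 1 < γ) (s : ℝ) (φ : Omega (Fin 2) → ℝ)
    {x : Omega (Fin 2)} {m : ℕ} (h : FZ x m) :
    ruelle (fun y => s * hof γ y) φ x
      = aH γ s * φ (cons 0 x) + cH γ s m * φ (cons 1 x) := by
  have hζ := zetaR_pos hγ
  have h0 : hof γ (cons 0 x) = -Real.log (zetaR γ) := by
    simpa using hof_eq (FZ_cons_zero h)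
  have h1 : hof γ (cons 1 x) = -γ * Real.log (((m : ℝ) + 2) / ((m : ℝ) + 1)) := by
    have h' := hof_eq (γ := γ) (FZ_cons_one h)
    rw [if_neg (Nat.succ_ne_zero m)] at h'
    push_cast at h'
    rw [show ((m : ℝ) + 1 + 1) = (m : ℝ) + 2 by ring] at h'
    exact h'
  have hr : (0 : ℝ) < ((m : ℝ) + 2) / ((m : ℝ) + 1) := by positivity
  unfold ruelle
  rw [Fin.sum_univ_two]
  simp only [smul_eq_mul, h0, h1]
  have e0 : Real.exp (s * -Real.log (zetaR γ)) = aH γ s := by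
    rw [aH, Real.rpow_def_of_pos hζ]
    ring_nf
  have e1 : Real.exp (s * (-γ * Real.log (((m : ℝ) + 2) / ((m : ℝ) + 1)))) = cH γ s m := by
    rw [cH, Real.rpow_def_of_pos hr]
    ring_nf
  rw [e0, e1]

lemma iter_eq {γ : ℝ} (hγ : 1 < γ) (s : ℝ) (n : ℕ) :
    ∀ (x : Omega (Fin 2)) (m : ℕ), FZ x m →
      (ruelle (fun y => s * hof γ y))^[n] indOne x = uH γ s n m := by
  induction n with
  | zero =>
    intro x m h
    simp only [Function.iterate_zero, id_eq, indOne, uH]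
    cases m with
    | zero => rw [if_neg (by rw [h.2]; decide), if_pos rfl]
    | succ k => rw [if_pos (h.1 0 (Nat.succ_pos k)), if_neg (Nat.succ_ne_zero k)]
  | succ n ih =>
    intro x m h
    rw [Function.iterate_succ_apply', ruelle_step hγ s _ h,
      ih _ 0 (FZ_cons_zero h), ih _ (m + 1) (FZ_cons_one h)]
    rfl

lemma rhoH_zero (t : ℝ) (m : ℕ) : rhoH t m 0 = 1 := by
  have : ((m : ℝ) + 1) ≠ 0 := by positivity
  simp [rhoH, div_self this]

lemma rhoH_one (γ s : ℝ) (m : ℕ) : rhoH (γ * s) m 1 = cH γ s m := by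
  unfold rhoH cH
  push_cast
  ring_nf

lemma rhoH_zero_left (t : ℝ) (j : ℕ) : rhoH t 0 j = betaH t j := by
  simp [rhoH, betaH]

lemma rhoH_tele (γ s : ℝ) (m j : ℕ) :
    cH γ s m * rhoH (γ * s) (m + 1) j = rhoH (γ * s) m (j + 1) := by
  unfold cH rhoH
  push_cast
  rw [← Real.mul_rpow (by positivity) (by positivity)]
  congr 1
  have h1 : ((m : ℝ) + 1) ≠ 0 := by positivity
  have h2 : ((m : ℝ) + 2) ≠ 0 := by positivity
  field_simp
  ring

lemma renewal (γ s : ℝ) (n : ℕ) :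
    ∀ m, uH γ s (n + 1) m
      = aH γ s * ∑ j ∈ Finset.range (n + 1), rhoH (γ * s) m j * uH γ s (n - j) 0
        + rhoH (γ * s) m (n + 1) := by
  induction n with
  | zero =>
    intro m
    show aH γ s * uH γ s 0 0 + cH γ s m * uH γ s 0 (m + 1) = _
    simp [uH, rhoH_zero, rhoH_one]
  | succ n ih =>
    intro m
    have h1 : uH γ s (n + 2) m
        = aH γ s * uH γ s (n + 1) 0 + cH γ s m * uH γ s (n + 1) (m + 1) := rfl
    rw [h1, ih (m + 1)]
    rw [Finset.sum_range_succ' (fun j => rhoH (γ * s) m j * uH γ s (n + 1 - j) 0) (n + 1)]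
    simp only [rhoH_zero, one_mul, Nat.succ_sub_succ_eq_sub, Nat.sub_zero]
    rw [mul_add, Finset.mul_sum, Finset.mul_sum]
    have htele : ∀ j, cH γ s m * (aH γ s * (rhoH (γ * s) (m + 1) j * uH γ s (n - j) 0))
        = aH γ s * (rhoH (γ * s) m (j + 1) * uH γ s (n - j) 0) := by
      intro j
      rw [show cH γ s m * (aH γ s * (rhoH (γ * s) (m + 1) j * uH γ s (n - j) 0))
          = aH γ s * ((cH γ s m * rhoH (γ * s) (m + 1) j) * uH γ s (n - j) 0) by ring,
        rhoH_tele]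
    rw [Finset.sum_congr rfl (fun j _ => htele j), rhoH_tele]
    rw [mul_add, Finset.mul_sum]
    ring

lemma renewal0 (γ s : ℝ) (n : ℕ) :
    uH γ s (n + 1) 0
      = aH γ s * ∑ j ∈ Finset.range (n + 1), betaH (γ * s) j * uH γ s (n - j) 0
        + betaH (γ * s) (n + 1) := by
  have := renewal γ s n 0
  simpa only [rhoH_zero_left] using this

lemma tri_swap (f : ℕ → ℕ → ℝ) :
    ∀ M, ∑ n ∈ Finset.range M, ∑ j ∈ Finset.range (n + 1), f n j
      = ∑ j ∈ Finset.range M, ∑ n ∈ Finset.Ico j M, f n j := by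
  intro M
  induction M with
  | zero => simp
  | succ M ih =>
    rw [Finset.sum_range_succ, ih,
      Finset.sum_range_succ (fun j => ∑ n ∈ Finset.Ico j (M + 1), f n j) M]
    have h1 : ∀ j ∈ Finset.range M,
        ∑ n ∈ Finset.Ico j (M + 1), f n j = ∑ n ∈ Finset.Ico j M, f n j + f M j :=
      fun j hj => Finset.sum_Ico_succ_top (le_of_lt (Finset.mem_range.mp hj)) _
    rw [Finset.sum_congr rfl h1, Finset.sum_add_distrib]
    have h2 : ∑ n ∈ Finset.Ico M (M + 1), f n M = f M M := by simp
    rw [h2, Finset.sum_range_succ (fun j => f M j) M]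
    ring

lemma q_lt_one {γ s : ℝ} (hγ : 2 < γ) (hs : 1 < s) : aH γ s * zetaR (γ * s) < 1 := by
  have hγ1 : 1 < γ := by linarith
  have hζpos := zetaR_pos hγ1
  have hZγ : zetaR (γ * s) < zetaR γ := by
    rw [zetaR_eq, zetaR_eq]
    refine Summable.tsum_lt_tsum_of_nonneg (i := 1) (fun b => betaH_nonneg _ b) (fun b => ?_) ?_
      (summable_betaH hγ1)
    · exact Real.rpow_le_rpow_of_exponent_le (by linarith [Nat.cast_nonneg (α := ℝ) b])
        (by nlinarith)
    · exact Real.rpow_lt_rpow_of_exponent_lt (by norm_num) (by nlinarith)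
  have hle : zetaR γ ≤ zetaR γ ^ s := by
    calc zetaR γ = zetaR γ ^ (1 : ℝ) := (Real.rpow_one _).symm
      _ ≤ zetaR γ ^ s := Real.rpow_le_rpow_of_exponent_le (one_le_zetaR hγ1) hs.le
  have hpow : 0 < zetaR γ ^ s := Real.rpow_pos_of_pos hζpos s
  have heq : aH γ s * zetaR (γ * s) = zetaR (γ * s) / zetaR γ ^ s := by
    rw [aH, Real.rpow_neg hζpos.le]; ring
  rw [heq, div_lt_one hpow]
  exact lt_of_lt_of_le hZγ hle

lemma sum_range_le {γ s : ℝ} (hγ : 2 < γ) (hs : 1 < s) (N : ℕ) :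
    ∑ n ∈ Finset.range N, uH γ s n 0
      ≤ (zetaR (γ * s) - 1) / (1 - aH γ s * zetaR (γ * s)) := by
  have hγ1 : 1 < γ := by linarith
  have ht : 1 < γ * s := by nlinarith
  set Z := zetaR (γ * s) with hZ
  have hZ1 : 1 ≤ Z := one_le_zetaR ht
  have hq := q_lt_one hγ hs
  have hq0 : 0 ≤ aH γ s * Z := mul_nonneg (aH_nonneg hγ1 s) (by linarith)
  have hβsum := summable_betaH ht
  set S : ℕ → ℝ := fun N => ∑ n ∈ Finset.range N, uH γ s n 0 with hS
  have hSnonneg : ∀ N, 0 ≤ S N := fun N => Finset.sum_nonneg fun i _ => uH_nonneg hγ1 s i 0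
  have key : ∀ N, S N ≤ aH γ s * Z * S N + (Z - 1) := by
    intro N
    cases N with
    | zero =>
      simp only [hS, Finset.range_zero, Finset.sum_empty, mul_zero, zero_add]
      linarith
    | succ M =>
      have hsplit : S (M + 1) = ∑ n ∈ Finset.range M, uH γ s (n + 1) 0 := by
        simp only [hS]
        rw [Finset.sum_range_succ' (fun n => uH γ s n 0) M]
        simp [uH]
      have hexp : S (M + 1) = aH γ s * (∑ n ∈ Finset.range M, ∑ j ∈ Finset.range (n + 1),
          betaH (γ * s) j * uH γ s (n - j) 0)
            + ∑ n ∈ Finset.range M, betaH (γ * s) (n + 1) := by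
        rw [hsplit, Finset.sum_congr rfl (fun n _ => renewal0 γ s n), Finset.sum_add_distrib,
          ← Finset.mul_sum]
      have hdouble : ∑ n ∈ Finset.range M, ∑ j ∈ Finset.range (n + 1),
          betaH (γ * s) j * uH γ s (n - j) 0 ≤ Z * S (M + 1) := by
        rw [tri_swap]
        have hinner : ∀ j ∈ Finset.range M,
            ∑ n ∈ Finset.Ico j M, betaH (γ * s) j * uH γ s (n - j) 0
              ≤ betaH (γ * s) j * S (M + 1) := by
          intro j _
          rw [← Finset.mul_sum]
          refine mul_le_mul_of_nonneg_left ?_ (betaH_nonneg _ j)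
          rw [Finset.sum_Ico_eq_sum_range]
          have hc : ∀ i, uH γ s (j + i - j) 0 = uH γ s i 0 := fun i => by
            rw [Nat.add_sub_cancel_left]
          rw [Finset.sum_congr rfl (fun i _ => hc i)]
          exact Finset.sum_le_sum_of_subset_of_nonneg
            (Finset.range_subset_range.mpr (by omega)) (fun i _ _ => uH_nonneg hγ1 s i 0)
        calc ∑ j ∈ Finset.range M, ∑ n ∈ Finset.Ico j M, betaH (γ * s) j * uH γ s (n - j) 0
            ≤ ∑ j ∈ Finset.range M, betaH (γ * s) j * S (M + 1) := Finset.sum_le_sum hinner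
          _ = (∑ j ∈ Finset.range M, betaH (γ * s) j) * S (M + 1) := by
              rw [Finset.sum_mul]
          _ ≤ Z * S (M + 1) := mul_le_mul_of_nonneg_right
              (Summable.sum_le_tsum _ (fun i _ => betaH_nonneg _ i) hβsum) (hSnonneg _)
      have htail : ∑ n ∈ Finset.range M, betaH (γ * s) (n + 1) ≤ Z - 1 := by
        have hle := Summable.sum_le_tsum (Finset.range (M + 1)) (fun i _ => betaH_nonneg (γ * s) i)
          hβsum
        rw [Finset.sum_range_succ' (betaH (γ * s)) M, betaH_zero] at hle
        rw [← zetaR_eq] at hle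
        linarith
      calc S (M + 1)
          = aH γ s * (∑ n ∈ Finset.range M, ∑ j ∈ Finset.range (n + 1),
              betaH (γ * s) j * uH γ s (n - j) 0)
            + ∑ n ∈ Finset.range M, betaH (γ * s) (n + 1) := hexp
        _ ≤ aH γ s * (Z * S (M + 1)) + (Z - 1) :=
            add_le_add (mul_le_mul_of_nonneg_left hdouble (aH_nonneg hγ1 s)) htail
        _ = aH γ s * Z * S (M + 1) + (Z - 1) := by ring
  have h1q : 0 < 1 - aH γ s * Z := by linarith
  rw [le_div_iff₀ h1q]
  nlinarith [key N]

lemma uH_summable {γ s : ℝ} (hγ : 2 < γ) (hs : 1 < s) :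
    Summable (fun n => uH γ s n 0) :=
  summable_of_sum_range_le (fun n => uH_nonneg (by linarith) s n 0) (sum_range_le hγ hs)

lemma uH_tsum {γ s : ℝ} (hγ : 2 < γ) (hs : 1 < s) :
    ∑' n, uH γ s n 0
      = (zetaR (γ * s) - 1) / (1 - zetaR (γ * s) * zetaR γ ^ (-s)) := by
  have hγ1 : 1 < γ := by linarith
  have ht : 1 < γ * s := by nlinarith
  set Z := zetaR (γ * s) with hZ
  set T := ∑' n, uH γ s n 0 with hT
  have husum := uH_summable hγ hs
  have hβsum := summable_betaH ht
  have hβnorm : Summable fun n => ‖betaH (γ * s) n‖ := by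
    simpa only [Real.norm_eq_abs] using hβsum.abs
  have hunorm : Summable fun n => ‖uH γ s n 0‖ := by
    simpa only [Real.norm_eq_abs] using husum.abs
  have hcs : Summable (fun n => ∑ k ∈ Finset.range (n + 1),
      betaH (γ * s) k * uH γ s (n - k) 0) :=
    (summable_norm_sum_mul_range_of_summable_norm hβnorm hunorm).of_norm
  have hprod : Z * T = ∑' n, ∑ k ∈ Finset.range (n + 1),
      betaH (γ * s) k * uH γ s (n - k) 0 := by
    rw [hZ, hT, zetaR_eq]
    exact tsum_mul_tsum_eq_tsum_sum_range_of_summable_norm hβnorm hunorm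
  have hshift : Summable fun n => betaH (γ * s) (n + 1) :=
    (summable_nat_add_iff 1).mpr hβsum
  have htail : ∑' n, betaH (γ * s) (n + 1) = Z - 1 := by
    have h := Summable.tsum_eq_zero_add hβsum
    rw [betaH_zero, ← zetaR_eq] at h
    linarith
  have hTeq : T = aH γ s * (Z * T) + (Z - 1) := by
    calc T = ∑' n, uH γ s (n + 1) 0 := by
          rw [hT, Summable.tsum_eq_zero_add husum]; simp [uH]
      _ = ∑' n, (aH γ s * ∑ j ∈ Finset.range (n + 1), betaH (γ * s) j * uH γ s (n - j) 0
            + betaH (γ * s) (n + 1)) := tsum_congr (renewal0 γ s)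
      _ = (∑' n, aH γ s * ∑ j ∈ Finset.range (n + 1), betaH (γ * s) j * uH γ s (n - j) 0)
            + ∑' n, betaH (γ * s) (n + 1) := Summable.tsum_add (hcs.mul_left _) hshift
      _ = aH γ s * (∑' n, ∑ j ∈ Finset.range (n + 1), betaH (γ * s) j * uH γ s (n - j) 0)
            + (Z - 1) := by rw [tsum_mul_left, htail]
      _ = aH γ s * (Z * T) + (Z - 1) := by rw [← hprod]
  have hq := q_lt_one hγ hs
  have h1q : 0 < 1 - aH γ s * Z := by linarith
  have hfin : T = (Z - 1) / (1 - aH γ s * Z) := by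
    rw [eq_div_iff (ne_of_gt h1q)]
    linear_combination hTeq
  rw [hfin, show aH γ s = zetaR γ ^ (-s) from rfl, mul_comm (zetaR γ ^ (-s)) Z]

/-- the zeta function of the Hofbauer model.
For `γ > 2`, `z ∈ C₀` and every `s > 1`, the series `∑_{n≥1} (L_{sg}^n 1_{[1]})(z)` converges
and equals `(ζ(γs) − 1)/(1 − ζ(γs) ζ(γ)^{−s})`. -/
theorem statement10 (γ : ℝ) (hγ : 2 < γ) (z : Omega (Fin 2)) (hz : z 0 = 0)
    (s : ℝ) (hs : 1 < s) :
    Summable (fun n : ℕ => LsHof γ s z (n + 1)) ∧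
      ∑' n : ℕ, LsHof γ s z (n + 1)
        = (zetaR (γ * s) - 1) / (1 - zetaR (γ * s) * zetaR γ ^ (-s)) := by
  have hγ1 : 1 < γ := by linarith
  have hFZ : FZ z 0 := ⟨fun i hi => absurd hi (Nat.not_lt_zero i), hz⟩
  have hiter : ∀ n, LsHof γ s z n = uH γ s n 0 := fun n => iter_eq hγ1 s n z 0 hFZ
  have husum := uH_summable hγ hs
  have hsum1 : Summable (fun n : ℕ => LsHof γ s z (n + 1)) :=
    ((summable_nat_add_iff 1).mpr husum).congr fun n => (hiter (n + 1)).symm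
  refine ⟨hsum1, ?_⟩
  have h0 : ∑' n, uH γ s n 0 = uH γ s 0 0 + ∑' n, uH γ s (n + 1) 0 := Summable.tsum_eq_zero_add husum
  have h1 : ∑' n : ℕ, LsHof γ s z (n + 1) = ∑' n, uH γ s (n + 1) 0 :=
    tsum_congr fun n => hiter (n + 1)
  have h2 : ∑' n, uH γ s (n + 1) 0 = ∑' n, uH γ s n 0 := by
    rw [h0]; simp [uH]
  rw [h1, h2, uH_tsum hγ hs]

end GS
end

section
/- Let γ>2 and define f(s)=ζ(γs) ζ(γ)^{−s} for s>0. Then f is differentiable at s=1 with f(1)=1 and f′(1) = (γ ζ′(γ) − ζ(γ) log ζ(γ))/ζ(γ) < 0, and for the Hofbauer potential g on Ω={0,1}^ℕ with z∈C₀ one has lim_{s→1⁺} (s−1) Σ_{n≥1} (L_{sg}^n 1_{[1]})(z) = (ζ(γ) − 1)/(−f′(1)); equivalently, this limit equals (1/c)·ν([1]) where c := −f′(1)/ζ(γ) and ν([1]) = (ζ(γ)−1)/ζ(γ) is the mass that the eigenprobability ν of L_g^* gives to the cylinder [1]. -/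
open Real MeasureTheory Filter Topology Set

open scoped Classical

namespace GS

lemma sumzeta {β : ℝ} (hβ : 1 < β) : Summable (fun n : ℕ => ((n:ℝ)+1) ^ (-β)) := by
  have h : Summable (fun n : ℕ => ((n:ℝ)) ^ (-β)) := Real.summable_nat_rpow.mpr (by linarith)
  have h2 := h.comp_injective (add_left_injective 1)
  apply h2.congr
  intro n
  simp [Function.comp]

noncomputable def zterm' (n : ℕ) (x : ℝ) : ℝ := (((n:ℝ)+1) ^ (-x) * Real.log ((n:ℝ)+1)) * (-1)

lemma zterm_hasDeriv (n : ℕ) (x : ℝ) :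
    HasDerivAt (fun y : ℝ => ((n:ℝ)+1) ^ (-y)) (zterm' n x) x := by
  have h := (Real.hasStrictDerivAt_const_rpow
    (show (0:ℝ) < (n:ℝ)+1 by positivity) (-x)).hasDerivAt
  exact h.comp x (hasDerivAt_neg x)

lemma log_le_two_sqrt {c : ℝ} (hc : 1 ≤ c) : Real.log c ≤ 2 * Real.sqrt c := by
  have h0 : (0:ℝ) < c := by linarith
  have h1 : Real.log (Real.sqrt c) ≤ Real.sqrt c - 1 :=
    Real.log_le_sub_one_of_pos (Real.sqrt_pos.mpr h0)
  have h2 : Real.log (Real.sqrt c) = Real.log c / 2 := Real.log_sqrt h0.le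
  nlinarith [Real.sqrt_nonneg c]

lemma usummable : Summable (fun n : ℕ => ((n:ℝ)+1) ^ (-(2:ℝ)) * Real.log ((n:ℝ)+1)) := by
  apply Summable.of_nonneg_of_le
    (fun n => mul_nonneg (Real.rpow_nonneg (by positivity) _)
      (Real.log_nonneg (by simp [Nat.cast_nonneg])))
    (fun n => ?_)
    ((sumzeta (show (1:ℝ) < 3/2 by norm_num)).mul_left 2)
  have hc : (1:ℝ) ≤ (n:ℝ)+1 := by simp [Nat.cast_nonneg]
  have h1 : Real.log ((n:ℝ)+1) ≤ 2 * ((n:ℝ)+1) ^ ((1:ℝ)/2) := by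
    have := log_le_two_sqrt hc
    rwa [Real.sqrt_eq_rpow] at this
  have h2 : ((n:ℝ)+1) ^ (-(2:ℝ)) * (2 * ((n:ℝ)+1) ^ ((1:ℝ)/2)) = 2 * ((n:ℝ)+1) ^ (-(3/2:ℝ)) := by
    rw [mul_comm, mul_assoc, ← Real.rpow_add (by positivity : (0:ℝ) < (n:ℝ)+1)]
    norm_num
  calc ((n:ℝ)+1) ^ (-(2:ℝ)) * Real.log ((n:ℝ)+1)
      ≤ ((n:ℝ)+1) ^ (-(2:ℝ)) * (2 * ((n:ℝ)+1) ^ ((1:ℝ)/2)) := by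
        apply mul_le_mul_of_nonneg_left h1 (by positivity)
    _ = 2 * ((n:ℝ)+1) ^ (-(3/2:ℝ)) := h2

lemma zeta_hasDerivAt {x : ℝ} (hx : 2 < x) : HasDerivAt zetaR (∑' n, zterm' n x) x := by
  have := hasDerivAt_tsum_of_isPreconnected usummable isOpen_Ioi
    (isPreconnected_Ioi (a := (2:ℝ)))
    (fun n y _ => zterm_hasDeriv n y)
    (fun n y hy => ?_) hx (sumzeta (by linarith : (1:ℝ) < x)) hx
  · exact this
  · have hc : (1:ℝ) ≤ (n:ℝ)+1 := by simp [Nat.cast_nonneg]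
    have hlog : 0 ≤ Real.log ((n:ℝ)+1) := Real.log_nonneg hc
    have hb : ((n:ℝ)+1) ^ (-y) ≤ ((n:ℝ)+1) ^ (-(2:ℝ)) :=
      Real.rpow_le_rpow_of_exponent_le hc (by simp only [Set.mem_Ioi] at hy; linarith)
    have : ‖zterm' n y‖ = ((n:ℝ)+1) ^ (-y) * Real.log ((n:ℝ)+1) := by
      rw [zterm', norm_mul, norm_neg, norm_one, mul_one, Real.norm_eq_abs,
        abs_of_nonneg (by positivity)]
    rw [this]
    exact mul_le_mul_of_nonneg_right hb hlog

lemma zeta_gt_one {β : ℝ} (hβ : 1 < β) : 1 < zetaR β := by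
  have hs := sumzeta hβ
  have h2 : ∑ n ∈ Finset.range 2, ((n:ℝ)+1) ^ (-β) ≤ zetaR β :=
    Summable.sum_le_tsum _ (fun i _ => Real.rpow_nonneg (by positivity) _) hs
  have : (0:ℝ) < ((1:ℝ)+1) ^ (-β) := Real.rpow_pos_of_pos (by norm_num) _
  rw [Finset.sum_range_succ, Finset.sum_range_one] at h2
  simp only [Nat.cast_zero, Nat.cast_one, zero_add, Real.one_rpow] at h2
  linarith

lemma zeta_pos {β : ℝ} (hβ : 1 < β) : 0 < zetaR β := lt_trans one_pos (zeta_gt_one hβ)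

lemma zterm'_summable {x : ℝ} (hx : 2 < x) : Summable (fun n => zterm' n x) := by
  have h := (zeta_hasDerivAt hx)
  -- easier: comparison with usummable
  apply Summable.of_norm
  apply Summable.of_nonneg_of_le (fun n => norm_nonneg _) (fun n => ?_) usummable
  have hc : (1:ℝ) ≤ (n:ℝ)+1 := by simp [Nat.cast_nonneg]
  have hlog : 0 ≤ Real.log ((n:ℝ)+1) := Real.log_nonneg hc
  have hb : ((n:ℝ)+1) ^ (-x) ≤ ((n:ℝ)+1) ^ (-(2:ℝ)) :=
    Real.rpow_le_rpow_of_exponent_le hc (by linarith)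
  have : ‖zterm' n x‖ = ((n:ℝ)+1) ^ (-x) * Real.log ((n:ℝ)+1) := by
    rw [zterm', norm_mul, norm_neg, norm_one, mul_one, Real.norm_eq_abs,
      abs_of_nonneg (by positivity)]
  rw [this]
  exact mul_le_mul_of_nonneg_right hb hlog

lemma deriv_zeta_neg {x : ℝ} (hx : 2 < x) : deriv zetaR x < 0 := by
  rw [(zeta_hasDerivAt hx).deriv]
  have hsum : Summable (fun n : ℕ => ((n:ℝ)+1) ^ (-x) * Real.log ((n:ℝ)+1)) := by
    have := (zterm'_summable hx).neg
    apply this.congr; intro n; simp [zterm']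
  have hterm : (0:ℝ) < ((1:ℕ):ℝ) + 1 := by norm_num
  have h1 : ((1:ℕ):ℝ)+1 = 2 := by norm_num
  have hpos : (0:ℝ) < (((1:ℕ):ℝ)+1) ^ (-x) * Real.log (((1:ℕ):ℝ)+1) := by
    apply mul_pos (Real.rpow_pos_of_pos hterm _)
    rw [h1]; exact Real.log_pos (by norm_num)
  have hle : (((1:ℕ):ℝ)+1) ^ (-x) * Real.log (((1:ℕ):ℝ)+1)
      ≤ ∑' n : ℕ, ((n:ℝ)+1) ^ (-x) * Real.log ((n:ℝ)+1) := by
    apply Summable.le_tsum hsum 1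
    intro j _
    exact mul_nonneg (Real.rpow_nonneg (by positivity) _)
      (Real.log_nonneg (by simp [Nat.cast_nonneg]))
  have heq : ∑' n, zterm' n x = -∑' n : ℕ, ((n:ℝ)+1) ^ (-x) * Real.log ((n:ℝ)+1) := by
    rw [← tsum_neg]; apply tsum_congr; intro n; simp [zterm']
  rw [heq]
  linarith

lemma F_hasDerivAt {γ : ℝ} (hγ : 2 < γ) :
    HasDerivAt (fun s : ℝ => zetaR (γ * s) * zetaR γ ^ (-s)) (fprime γ) 1 := by
  have hζpos : 0 < zetaR γ := zeta_pos (by linarith)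
  have h1 : HasDerivAt (fun s : ℝ => γ * s) γ 1 := by
    simpa using (hasDerivAt_id (1:ℝ)).const_mul γ
  have h2 : HasDerivAt zetaR (deriv zetaR γ) (γ * 1) := by
    rw [mul_one]; exact (zeta_hasDerivAt hγ).differentiableAt.hasDerivAt
  have h3 : HasDerivAt (fun s : ℝ => zetaR (γ * s)) (deriv zetaR γ * γ) 1 := h2.comp 1 h1
  have h4 : HasDerivAt (fun s : ℝ => zetaR γ ^ (-s))
      ((zetaR γ ^ (-(1:ℝ)) * Real.log (zetaR γ)) * (-1)) 1 := by
    exact ((Real.hasStrictDerivAt_const_rpow hζpos (-1)).hasDerivAt).comp 1 (hasDerivAt_neg 1)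
  have h5 := h3.mul h4
  have hζne : zetaR γ ≠ 0 := ne_of_gt hζpos
  refine h5.congr_deriv ?_
  rw [mul_one, Real.rpow_neg_one]
  rw [fprime]
  field_simp
  ring

lemma fprime_neg {γ : ℝ} (hγ : 2 < γ) : fprime γ < 0 := by
  have hζ : 1 < zetaR γ := zeta_gt_one (by linarith)
  have hlog : 0 < Real.log (zetaR γ) := Real.log_pos hζ
  have hD : deriv zetaR γ < 0 := deriv_zeta_neg hγ
  apply div_neg_of_neg_of_pos _ (by linarith)
  nlinarith

def Run (r : ℕ) (x : Omega (Fin 2)) : Prop := (∀ i, i < r → x i = 1) ∧ x r = 0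

lemma run_cons_zero (x : Omega (Fin 2)) : Run 0 (cons 0 x) :=
  ⟨fun i h => absurd h (Nat.not_lt_zero i), rfl⟩

lemma run_cons_one {r : ℕ} {x : Omega (Fin 2)} (h : Run r x) : Run (r+1) (cons 1 x) := by
  constructor
  · intro i hi
    cases i with
    | zero => rfl
    | succ j => exact h.1 j (by omega)
  · exact h.2

lemma hof_run {γ : ℝ} {r : ℕ} {x : Omega (Fin 2)} (h : Run r x) :
    hof γ x = if r = 0 then -Real.log (zetaR γ)
      else -γ * Real.log (((r : ℝ) + 1) / (r : ℝ)) := by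
  have hne : ¬ ∀ n, x n = 1 := by
    intro hall
    have h2 := hall r
    rw [h.2] at h2
    exact absurd h2 (by decide)
  have hfind : Nat.find (not_forall.mp hne) = r := by
    rw [Nat.find_eq_iff]
    constructor
    · rw [h.2]; decide
    · intro m hm
      simp [h.1 m hm]
  rw [hof, dif_neg hne]
  simp only [hfind]

lemma exp_w0 (γ s : ℝ) (hγ : 1 < γ) (x : Omega (Fin 2)) :
    Real.exp (s * hof γ (cons 0 x)) = zetaR γ ^ (-s) := by
  have hζ : (0:ℝ) < zetaR γ := zeta_pos hγ
  rw [hof_run (run_cons_zero x), if_pos rfl, Real.rpow_def_of_pos hζ]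
  congr 1
  ring

lemma exp_w1 (γ s : ℝ) {r : ℕ} {x : Omega (Fin 2)} (h : Run r x) :
    Real.exp (s * hof γ (cons 1 x)) = (((r:ℝ)+1)/((r:ℝ)+2)) ^ (γ*s) := by
  rw [hof_run (run_cons_one h), if_neg (Nat.succ_ne_zero r)]
  have hcast : (((r+1:ℕ):ℝ)+1)/((r+1:ℕ):ℝ) = ((r:ℝ)+2)/((r:ℝ)+1) := by
    push_cast; ring_nf
  rw [hcast]
  have hpos : (0:ℝ) < ((r:ℝ)+1)/((r:ℝ)+2) := by positivity
  rw [Real.rpow_def_of_pos hpos]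
  rw [show ((r:ℝ)+2)/((r:ℝ)+1) = (((r:ℝ)+1)/((r:ℝ)+2))⁻¹ by rw [inv_div], Real.log_inv]
  congr 1
  ring

noncomputable def Ahat (γ s : ℝ) : ℕ → ℕ → ℝ
  | 0, r => if 1 ≤ r then 1 else 0
  | n+1, r => zetaR γ ^ (-s) * Ahat γ s n 0
      + (((r:ℝ)+1)/((r:ℝ)+2)) ^ (γ*s) * Ahat γ s n (r+1)

lemma iter_eq_Ahat (γ s : ℝ) (hγ : 1 < γ) :
    ∀ (n : ℕ) {r : ℕ} {x : Omega (Fin 2)}, Run r x →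
      (ruelle (fun y => s * hof γ y))^[n] indOne x = Ahat γ s n r := by
  intro n
  induction n with
  | zero =>
    intro r x h
    simp only [Function.iterate_zero, id_eq, Ahat, indOne]
    rcases Nat.eq_zero_or_pos r with hr | hr
    · subst hr
      rw [if_neg (by rw [h.2]; decide), if_neg (by omega)]
    · rw [if_pos (h.1 0 hr), if_pos (by omega : 1 ≤ r)]
  | succ n ih =>
    intro r x h
    rw [Function.iterate_succ_apply']
    show ∑ q : Fin 2, Real.exp ((fun y => s * hof γ y) (cons q x)) •
      (ruelle (fun y => s * hof γ y))^[n] indOne (cons q x) = _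
    rw [Fin.sum_univ_two]
    rw [ih (run_cons_zero x), ih (run_cons_one h), smul_eq_mul, smul_eq_mul]
    simp only []
    rw [exp_w0 γ s hγ x, exp_w1 γ s h]
    rfl


noncomputable def Pfun (γ s : ℝ) (r j : ℕ) : ℝ := (((r:ℝ)+1)/((r:ℝ)+(j:ℝ)+1)) ^ (γ*s)

lemma Pfun_zero (γ s : ℝ) (r : ℕ) : Pfun γ s r 0 = 1 := by
  rw [Pfun]
  push_cast
  rw [add_zero, div_self (by positivity), Real.one_rpow]

lemma B_mul_P (γ s : ℝ) (r j : ℕ) :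
    (((r:ℝ)+1)/((r:ℝ)+2)) ^ (γ*s) * Pfun γ s (r+1) j = Pfun γ s r (j+1) := by
  rw [Pfun, Pfun, ← Real.mul_rpow (by positivity) (by positivity)]
  congr 1
  have h1 : ((r:ℝ))+2 ≠ 0 := by positivity
  have h2 : (((r+1:ℕ)):ℝ)+(j:ℝ)+1 ≠ 0 := by positivity
  push_cast
  rw [div_mul_div_comm]
  rw [div_eq_div_iff (by positivity) (by positivity)]
  push_cast
  ring

lemma Ahat_unroll (γ s : ℝ) : ∀ (n r : ℕ), Ahat γ s n r =
    zetaR γ ^ (-s) * ∑ j ∈ Finset.range n, Pfun γ s r j * Ahat γ s (n-1-j) 0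
      + Pfun γ s r n * Ahat γ s 0 (r+n) := by
  intro n
  induction n with
  | zero =>
    intro r
    simp [Pfun_zero]
  | succ n ih =>
    intro r
    have hrec : Ahat γ s (n+1) r = zetaR γ ^ (-s) * Ahat γ s n 0
        + (((r:ℝ)+1)/((r:ℝ)+2)) ^ (γ*s) * Ahat γ s n (r+1) := rfl
    rw [hrec, ih (r+1)]
    rw [Finset.sum_range_succ']
    have e1 : ∀ j ∈ Finset.range n,
        Pfun γ s r (j+1) * Ahat γ s (n+1-1-(j+1)) 0
          = Pfun γ s r (j+1) * Ahat γ s (n-1-j) 0 := by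
      intro j _
      congr 2
      omega
    rw [Finset.sum_congr rfl e1]
    simp only [Pfun_zero, one_mul]
    have e2 : n+1-1-0 = n := by omega
    rw [e2]
    have e3 : r + (n+1) = (r+1) + n := by omega
    rw [e3]
    simp only [← B_mul_P]
    set Z := zetaR γ ^ (-s) with hZ
    set B := (((r:ℝ)+1)/((r:ℝ)+2)) ^ (γ*s) with hB
    have hS : ∑ j ∈ Finset.range n, B * Pfun γ s (r+1) j * Ahat γ s (n-1-j) 0
        = B * ∑ j ∈ Finset.range n, Pfun γ s (r+1) j * Ahat γ s (n-1-j) 0 := by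
      rw [Finset.mul_sum]
      exact Finset.sum_congr rfl (fun j _ => by ring)
    rw [hS]
    ring

lemma Ahat_zero_zero (γ s : ℝ) : Ahat γ s 0 0 = 0 := by
  simp [Ahat]

lemma Pfun_at_zero (γ s : ℝ) (j : ℕ) : Pfun γ s 0 j = ((j:ℝ)+1) ^ (-(γ*s)) := by
  rw [Pfun, Real.rpow_neg (by positivity), ← Real.inv_rpow (by positivity)]
  congr 1
  push_cast
  rw [zero_add, zero_add, one_div]

lemma A_rec (γ s : ℝ) (n : ℕ) : Ahat γ s (n+1) 0 =
    zetaR γ ^ (-s) * ∑ j ∈ Finset.range (n+1), ((j:ℝ)+1) ^ (-(γ*s)) * Ahat γ s (n-j) 0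
      + ((n:ℝ)+2) ^ (-(γ*s)) := by
  have h := Ahat_unroll γ s (n+1) 0
  rw [h]
  have e1 : ∀ j ∈ Finset.range (n+1),
      Pfun γ s 0 j * Ahat γ s (n+1-1-j) 0 = ((j:ℝ)+1) ^ (-(γ*s)) * Ahat γ s (n-j) 0 := by
    intro j _
    rw [Pfun_at_zero, show n+1-1-j = n-j from by omega]
  rw [Finset.sum_congr rfl e1]
  have e2 : Ahat γ s 0 (0+(n+1)) = 1 := by
    simp [Ahat]
  rw [e2, mul_one, Pfun_at_zero]
  congr 2
  push_cast
  ring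


lemma zetaR_nonneg (β : ℝ) : 0 ≤ zetaR β :=
  tsum_nonneg (fun n => Real.rpow_nonneg (by positivity) _)

lemma Ahat_nonneg (γ s : ℝ) : ∀ (n r : ℕ), 0 ≤ Ahat γ s n r := by
  intro n
  induction n with
  | zero => intro r; rw [Ahat]; positivity
  | succ n ih =>
    intro r
    rw [Ahat]
    have h1 := ih 0
    have h2 := ih (r+1)
    have h3 : (0:ℝ) ≤ zetaR γ ^ (-s) := Real.rpow_nonneg (zetaR_nonneg γ) _
    have h4 : (0:ℝ) ≤ (((r:ℝ)+1)/((r:ℝ)+2)) ^ (γ*s) := Real.rpow_nonneg (by positivity) _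
    exact add_nonneg (mul_nonneg h3 h1) (mul_nonneg h4 h2)

lemma conv_le {f g : ℕ → ℝ} (hf : ∀ n, 0 ≤ f n) (hg : ∀ n, 0 ≤ g n) (N : ℕ) :
    ∑ n ∈ Finset.range N, ∑ j ∈ Finset.range (n+1), f j * g (n-j)
      ≤ (∑ j ∈ Finset.range N, f j) * (∑ m ∈ Finset.range N, g m) := by
  have h1 : ∀ n, ∑ j ∈ Finset.range (n+1), f j * g (n-j)
      = ∑ p ∈ Finset.HasAntidiagonal.antidiagonal n, f p.1 * g p.2 :=
    fun n => (Finset.Nat.sum_antidiagonal_eq_sum_range_succ (fun i j => f i * g j) n).symm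
  simp only [h1]
  have hdisj : (↑(Finset.range N) : Set ℕ).PairwiseDisjoint Finset.HasAntidiagonal.antidiagonal := by
    intro m _ n _ hmn
    apply Finset.disjoint_left.mpr
    intro p hpm hpn
    rw [Finset.HasAntidiagonal.mem_antidiagonal] at hpm hpn
    exact hmn (by omega)
  rw [← Finset.sum_biUnion hdisj]
  rw [Finset.sum_mul_sum]
  rw [← Finset.sum_product']
  apply Finset.sum_le_sum_of_subset_of_nonneg
  · intro p hp
    simp only [Finset.mem_biUnion] at hp
    obtain ⟨n, hn, hpn⟩ := hp
    rw [Finset.HasAntidiagonal.mem_antidiagonal] at hpn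
    simp only [Finset.mem_range] at hn
    simp only [Finset.mem_product, Finset.mem_range]
    omega
  · intro p _ _
    exact mul_nonneg (hf _) (hg _)

lemma F_lt_one {γ s : ℝ} (hγ : 2 < γ) (hs : 1 < s) :
    zetaR (γ*s) * zetaR γ ^ (-s) < 1 := by
  have hγ1 : (1:ℝ) < γ := by linarith
  have hζpos : 0 < zetaR γ := zeta_pos hγ1
  have hβ : (1:ℝ) < γ*s := by nlinarith
  have h1 : zetaR (γ*s) ≤ zetaR γ := by
    apply Summable.tsum_le_tsum _ (sumzeta hβ) (sumzeta hγ1)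
    intro n
    apply Real.rpow_le_rpow_of_exponent_le (by simp [Nat.cast_nonneg])
    nlinarith
  have h2 : zetaR γ ^ (-s) < zetaR γ ^ (-(1:ℝ)) :=
    Real.rpow_lt_rpow_of_exponent_lt (zeta_gt_one hγ1) (by linarith)
  calc zetaR (γ*s) * zetaR γ ^ (-s) ≤ zetaR γ * zetaR γ ^ (-s) :=
        mul_le_mul_of_nonneg_right h1 (Real.rpow_nonneg hζpos.le _)
    _ < zetaR γ * zetaR γ ^ (-(1:ℝ)) := by
        apply mul_lt_mul_of_pos_left h2 hζpos
    _ = 1 := by rw [Real.rpow_neg_one]; exact mul_inv_cancel₀ (ne_of_gt hζpos)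

lemma partial_bound {γ s : ℝ} (hγ : 2 < γ) (hs : 1 < s) (N : ℕ) :
    ∑ n ∈ Finset.range N, Ahat γ s n 0
      ≤ (zetaR (γ*s) - 1) / (1 - zetaR (γ*s) * zetaR γ ^ (-s)) := by
  have hγ1 : (1:ℝ) < γ := by linarith
  have hβ : (1:ℝ) < γ*s := by nlinarith
  have hF0 : 0 ≤ zetaR (γ*s) * zetaR γ ^ (-s) :=
    mul_nonneg (zeta_pos hβ).le (Real.rpow_nonneg (zeta_pos hγ1).le _)
  have hF1 : zetaR (γ*s) * zetaR γ ^ (-s) < 1 := F_lt_one hγ hs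
  have hC : (0:ℝ) ≤ zetaR (γ*s) - 1 := by linarith [zeta_gt_one hβ]
  set F := zetaR (γ*s) * zetaR γ ^ (-s) with hF
  set C := zetaR (γ*s) - 1 with hCdef
  induction N with
  | zero => simp only [Finset.range_zero, Finset.sum_empty]; exact div_nonneg hC (by linarith)
  | succ N ihN =>
    rw [Finset.sum_range_succ']
    rw [Ahat_zero_zero, add_zero]
    have step : ∑ n ∈ Finset.range N, Ahat γ s (n+1) 0
        ≤ F * ∑ m ∈ Finset.range N, Ahat γ s m 0 + C := by
      have hrw : ∀ n ∈ Finset.range N, Ahat γ s (n+1) 0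
          = zetaR γ ^ (-s) * ∑ j ∈ Finset.range (n+1),
              ((j:ℝ)+1) ^ (-(γ*s)) * Ahat γ s (n-j) 0 + ((n:ℝ)+2) ^ (-(γ*s)) :=
        fun n _ => A_rec γ s n
      have hconv : ∑ n ∈ Finset.range N, ∑ j ∈ Finset.range (n+1),
            ((j:ℝ)+1) ^ (-(γ*s)) * Ahat γ s (n-j) 0
          ≤ (∑ j ∈ Finset.range N, ((j:ℝ)+1) ^ (-(γ*s)))
            * (∑ m ∈ Finset.range N, Ahat γ s m 0) :=
        conv_le (fun n => Real.rpow_nonneg (by positivity) _) (fun n => Ahat_nonneg γ s n 0) N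
      have hzb : ∑ j ∈ Finset.range N, ((j:ℝ)+1) ^ (-(γ*s)) ≤ zetaR (γ*s) :=
        Summable.sum_le_tsum _ (fun i _ => Real.rpow_nonneg (by positivity) _) (sumzeta hβ)
      have htail : ∑ n ∈ Finset.range N, ((n:ℝ)+2) ^ (-(γ*s)) ≤ C := by
        have h0 : (1:ℝ) + ∑ n ∈ Finset.range N, ((n:ℝ)+2) ^ (-(γ*s))
            = ∑ m ∈ Finset.range (N+1), ((m:ℝ)+1) ^ (-(γ*s)) := by
          rw [Finset.sum_range_succ']
          have hcst : ∀ i ∈ Finset.range N,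
              (((i+1:ℕ):ℝ)+1) ^ (-(γ*s)) = ((i:ℝ)+2) ^ (-(γ*s)) := by
            intro i _
            congr 1
            push_cast
            ring
          rw [Finset.sum_congr rfl hcst]
          norm_num
          exact add_comm _ _
        have h1 : ∑ m ∈ Finset.range (N+1), ((m:ℝ)+1) ^ (-(γ*s)) ≤ zetaR (γ*s) :=
          Summable.sum_le_tsum _ (fun i _ => Real.rpow_nonneg (by positivity) _) (sumzeta hβ)
        rw [hCdef]
        linarith
      have hZnn : (0:ℝ) ≤ zetaR γ ^ (-s) := Real.rpow_nonneg (zeta_pos hγ1).le _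
      have hAnn : (0:ℝ) ≤ ∑ m ∈ Finset.range N, Ahat γ s m 0 :=
        Finset.sum_nonneg (fun m _ => Ahat_nonneg γ s m 0)
      calc ∑ n ∈ Finset.range N, Ahat γ s (n+1) 0
          = zetaR γ ^ (-s) * ∑ n ∈ Finset.range N, ∑ j ∈ Finset.range (n+1),
              ((j:ℝ)+1) ^ (-(γ*s)) * Ahat γ s (n-j) 0
            + ∑ n ∈ Finset.range N, ((n:ℝ)+2) ^ (-(γ*s)) := by
              rw [Finset.sum_congr rfl hrw, Finset.sum_add_distrib, ← Finset.mul_sum]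
        _ ≤ zetaR γ ^ (-s) * ((∑ j ∈ Finset.range N, ((j:ℝ)+1) ^ (-(γ*s)))
              * (∑ m ∈ Finset.range N, Ahat γ s m 0)) + C := by
            apply add_le_add (mul_le_mul_of_nonneg_left hconv hZnn) htail
        _ ≤ zetaR γ ^ (-s) * (zetaR (γ*s) * (∑ m ∈ Finset.range N, Ahat γ s m 0)) + C := by
            apply add_le_add_left
            apply mul_le_mul_of_nonneg_left _ hZnn
            exact mul_le_mul_of_nonneg_right hzb hAnn
        _ = F * ∑ m ∈ Finset.range N, Ahat γ s m 0 + C := by rw [hF]; ring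
    have hmono : ∑ m ∈ Finset.range N, Ahat γ s m 0
        ≤ C / (1 - F) := ihN
    have h1F : 0 < 1 - F := by linarith
    calc ∑ n ∈ Finset.range N, Ahat γ s (n+1) 0
        ≤ F * ∑ m ∈ Finset.range N, Ahat γ s m 0 + C := step
      _ ≤ F * (C / (1-F)) + C := by
          apply add_le_add_left (mul_le_mul_of_nonneg_left hmono hF0)
      _ = C / (1-F) := by field_simp; ring

set_option maxHeartbeats 1000000 in
lemma tsum_A_eq {γ s : ℝ} (hγ : 2 < γ) (hs : 1 < s) :
    Summable (fun n : ℕ => Ahat γ s (n+1) 0) ∧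
    ∑' n : ℕ, Ahat γ s (n+1) 0
      = (zetaR (γ*s) - 1) / (1 - zetaR (γ*s) * zetaR γ ^ (-s)) := by
  have hγ1 : (1:ℝ) < γ := by linarith
  have hβ : (1:ℝ) < γ*s := by nlinarith
  have hF1 : zetaR (γ*s) * zetaR γ ^ (-s) < 1 := F_lt_one hγ hs
  have hAnn : ∀ n, 0 ≤ Ahat γ s n 0 := fun n => Ahat_nonneg γ s n 0
  have ha : Summable (fun j : ℕ => ((j:ℝ)+1) ^ (-(γ*s))) := sumzeta hβ
  have hann : ∀ j : ℕ, (0:ℝ) ≤ ((j:ℝ)+1) ^ (-(γ*s)) :=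
    fun j => Real.rpow_nonneg (by positivity) _
  -- summability of A
  have hsumA : Summable (fun n : ℕ => Ahat γ s n 0) := by
    apply summable_of_sum_range_le hAnn (partial_bound hγ hs)
  have hsumA1 : Summable (fun n : ℕ => Ahat γ s (n+1) 0) :=
    (summable_nat_add_iff 1).mpr hsumA
  refine ⟨hsumA1, ?_⟩
  -- Cauchy product summabilities
  have hprod : Summable (fun x : ℕ × ℕ => ((x.1:ℝ)+1) ^ (-(γ*s)) * Ahat γ s x.2 0) :=
    ha.mul_of_nonneg hsumA hann hAnn
  have hconv : Summable (fun n : ℕ => ∑ j ∈ Finset.range (n+1),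
      ((j:ℝ)+1) ^ (-(γ*s)) * Ahat γ s (n-j) 0) :=
    summable_sum_mul_range_of_summable_mul (f := fun j : ℕ => ((j:ℝ)+1) ^ (-(γ*s)))
      (g := fun m : ℕ => Ahat γ s m 0) hprod
  have hcauchy : (∑' j : ℕ, ((j:ℝ)+1) ^ (-(γ*s))) * (∑' n : ℕ, Ahat γ s n 0)
      = ∑' n : ℕ, ∑ j ∈ Finset.range (n+1), ((j:ℝ)+1) ^ (-(γ*s)) * Ahat γ s (n-j) 0 :=
    Summable.tsum_mul_tsum_eq_tsum_sum_range ha hsumA hprod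
  have hT0 : ∑' n : ℕ, Ahat γ s n 0 = ∑' n : ℕ, Ahat γ s (n+1) 0 := by
    rw [Summable.tsum_eq_zero_add hsumA, Ahat_zero_zero, zero_add]
  have hza : zetaR (γ*s) = ∑' j : ℕ, ((j:ℝ)+1) ^ (-(γ*s)) := by rw [zetaR]
  have htail : ∑' n : ℕ, ((n:ℝ)+2) ^ (-(γ*s)) = zetaR (γ*s) - 1 := by
    have h1 : zetaR (γ*s) = 1 + ∑' n : ℕ, (((n+1:ℕ):ℝ)+1) ^ (-(γ*s)) := by
      rw [hza, Summable.tsum_eq_zero_add ha]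
      norm_num
    have h2 : ∑' n : ℕ, (((n+1:ℕ):ℝ)+1) ^ (-(γ*s)) = ∑' n : ℕ, ((n:ℝ)+2) ^ (-(γ*s)) := by
      apply tsum_congr
      intro n
      congr 1
      push_cast
      ring
    rw [h2] at h1
    linarith
  set T := ∑' n : ℕ, Ahat γ s (n+1) 0 with hTdef
  have heq : T = zetaR γ ^ (-s) * (zetaR (γ*s) * T) + (zetaR (γ*s) - 1) := by
    have hrw : ∀ n : ℕ, Ahat γ s (n+1) 0
        = zetaR γ ^ (-s) * ∑ j ∈ Finset.range (n+1),
            ((j:ℝ)+1) ^ (-(γ*s)) * Ahat γ s (n-j) 0 + ((n:ℝ)+2) ^ (-(γ*s)) :=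
      fun n => A_rec γ s n
    have hsum2 : Summable (fun n : ℕ => ((n:ℝ)+2) ^ (-(γ*s))) := by
      apply Summable.congr ((summable_nat_add_iff 1).mpr ha)
      intro n
      congr 1
      push_cast
      ring
    calc T = ∑' n : ℕ, (zetaR γ ^ (-s) * ∑ j ∈ Finset.range (n+1),
            ((j:ℝ)+1) ^ (-(γ*s)) * Ahat γ s (n-j) 0 + ((n:ℝ)+2) ^ (-(γ*s))) :=
          tsum_congr hrw
      _ = zetaR γ ^ (-s) * ∑' n : ℕ, (∑ j ∈ Finset.range (n+1),
            ((j:ℝ)+1) ^ (-(γ*s)) * Ahat γ s (n-j) 0) + ∑' n : ℕ, ((n:ℝ)+2) ^ (-(γ*s)) := by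
          rw [Summable.tsum_add (hconv.mul_left _) hsum2, tsum_mul_left]
      _ = zetaR γ ^ (-s) * (zetaR (γ*s) * T) + (zetaR (γ*s) - 1) := by
          rw [← hcauchy, htail, ← hza, hT0]
  have h1F : 1 - zetaR (γ*s) * zetaR γ ^ (-s) ≠ 0 := by linarith
  rw [eq_div_iff h1F]
  linarith [heq]

/-- For `γ > 2` and `f(s) = ζ(γs) ζ(γ)^{−s}`: `f(1) = 1`, `f` is differentiable at `s = 1` with
`f′(1) = (γ ζ′(γ) − ζ(γ) log ζ(γ))/ζ(γ) < 0`, and for the Hofbauer potential `g` with `z ∈ C₀`,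
`lim_{s→1⁺} (s−1) ∑_{n≥1} (L_{sg}^n 1_{[1]})(z) = (ζ(γ) − 1)/(−f′(1))`; equivalently this limit
equals `(1/c)·ν([1])` with `c := −f′(1)/ζ(γ)` and `ν([1]) = (ζ(γ)−1)/ζ(γ)`. -/
theorem statement11 (γ : ℝ) (hγ : 2 < γ) (z : Omega (Fin 2)) (hz : z 0 = 0) :
    zetaR (γ * 1) * zetaR γ ^ (-(1 : ℝ)) = 1 ∧
    HasDerivAt (fun s : ℝ => zetaR (γ * s) * zetaR γ ^ (-s)) (fprime γ) 1 ∧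
    fprime γ < 0 ∧
    Tendsto (fun s : ℝ => (s - 1) * ∑' n : ℕ, LsHof γ s z (n + 1)) (𝓝[>] (1 : ℝ))
      (𝓝 ((zetaR γ - 1) / (-fprime γ))) ∧
    (zetaR γ - 1) / (-fprime γ)
      = (1 / (-fprime γ / zetaR γ)) * ((zetaR γ - 1) / zetaR γ) := by
  have hγ1 : (1:ℝ) < γ := by linarith
  have hζpos : 0 < zetaR γ := zeta_pos hγ1
  have hζne : zetaR γ ≠ 0 := ne_of_gt hζpos
  have hfd : HasDerivAt (fun s : ℝ => zetaR (γ * s) * zetaR γ ^ (-s)) (fprime γ) 1 :=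
    F_hasDerivAt hγ
  have hfneg : fprime γ < 0 := fprime_neg hγ
  have hfne : fprime γ ≠ 0 := ne_of_lt hfneg
  have hone : zetaR (γ * 1) * zetaR γ ^ (-(1 : ℝ)) = 1 := by
    rw [mul_one, Real.rpow_neg_one]
    exact mul_inv_cancel₀ hζne
  refine ⟨hone, hfd, hfneg, ?_, ?_⟩
  · have hEq : ∀ s ∈ Ioi (1:ℝ), (zetaR (γ*s) - 1)
        * ((s-1) / (1 - zetaR (γ*s) * zetaR γ ^ (-s)))
        = (s - 1) * ∑' n : ℕ, LsHof γ s z (n + 1) := by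
      intro s hs
      rw [mem_Ioi] at hs
      have hL : ∀ n : ℕ, LsHof γ s z (n+1) = Ahat γ s (n+1) 0 := fun n =>
        iter_eq_Ahat γ s hγ1 (n+1) ⟨fun i h => absurd h (Nat.not_lt_zero i), hz⟩
      rw [tsum_congr hL, (tsum_A_eq hγ hs).2]
      have hne : 1 - zetaR (γ*s) * zetaR γ ^ (-s) ≠ 0 := by
        have := F_lt_one hγ hs
        intro h0
        rw [sub_eq_zero] at h0
        rw [← h0] at this
        exact lt_irrefl _ this
      field_simp
    have h₁ : Tendsto (fun s : ℝ => zetaR (γ*s) - 1) (𝓝[>] (1:ℝ)) (𝓝 (zetaR γ - 1)) := by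
      have hc : ContinuousAt (fun s : ℝ => zetaR (γ*s)) 1 := by
        have h0 : ContinuousAt zetaR (γ*1) := by
          rw [mul_one]
          exact (zeta_hasDerivAt hγ).continuousAt
        have h2 := ContinuousAt.comp (g := zetaR) (f := fun s : ℝ => γ * s) h0
          ((continuous_mul_left γ).continuousAt)
        exact h2
      have h2 : ContinuousAt (fun s : ℝ => zetaR (γ*s) - 1) 1 := hc.sub continuousAt_const
      have h3 := h2.tendsto
      rw [mul_one] at h3
      exact h3.mono_left nhdsWithin_le_nhds
    have h₂ : Tendsto (fun s : ℝ => (s-1) / (1 - zetaR (γ*s) * zetaR γ ^ (-s)))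
        (𝓝[>] (1:ℝ)) (𝓝 (-fprime γ)⁻¹) := by
      have hslope := hasDerivAt_iff_tendsto_slope.mp hfd
      have hneg : Tendsto (fun s : ℝ => (1 - zetaR (γ*s) * zetaR γ ^ (-s)) / (s-1))
          (𝓝[≠] (1:ℝ)) (𝓝 (-fprime γ)) := by
        apply Tendsto.congr _ hslope.neg
        intro x
        rw [slope_def_field, hone]
        rw [neg_div', neg_sub]
      have hinv := hneg.inv₀ (by exact neg_ne_zero.mpr hfne)
      have hcongr : ∀ x : ℝ, ((1 - zetaR (γ*x) * zetaR γ ^ (-x)) / (x-1))⁻¹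
          = (x-1) / (1 - zetaR (γ*x) * zetaR γ ^ (-x)) := fun x => inv_div _ _
      have := hinv.congr hcongr
      exact this.mono_left (nhdsWithin_mono 1 (fun x hx => ne_of_gt hx))
    have hmul := h₁.mul h₂
    have hval : (zetaR γ - 1) * (-fprime γ)⁻¹ = (zetaR γ - 1) / (-fprime γ) :=
      (div_eq_mul_inv _ _).symm
    rw [hval] at hmul
    apply Tendsto.congr' _ hmul
    exact eventually_mem_nhdsWithin.mono hEq
  · have hne : -fprime γ ≠ 0 := neg_ne_zero.mpr hfne
    field_simp


end GS
end

section
/- Let J be a g-function, fix x,y∈Ω, and let 0<α<1 satisfy α·|𝒜| < min{J(qz) : q∈𝒜, z∈Ω}. If a:Ω→ℂ is Lipschitz with respect to the metric d_α(u,v)=α^{N(u,v)}, then Σ_{w∈W*} |a(wx) − a(wy)| / 𝕁(wx) < ∞, where W* denotes the set of all finite words over 𝒜. -/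
open Real MeasureTheory Filter Topology Set

open scoped Classical

namespace GS

/-- The metric `d_α(u,v) = α^{N(u,v)}`, with `N(u,v) = inf{k ≥ 1 : u_k ≠ v_k}` and the
convention `α^{+∞} = 0` when `u = v` (sequences indexed from `0` in Lean). -/
noncomputable def dAlpha (α : ℝ) {𝒜 : Type} (u v : Omega 𝒜) : ℝ :=
  if u = v then 0 else α ^ (sInf {k : ℕ | u k ≠ v k} + 1)

set_option maxHeartbeats 1000000 in
/-- boundedness of the commutator `[D, L_a]`.
If `J` is a `g`-function and `0 < α < 1` satisfies `α|𝒜| < min J`, then for every `a`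
Lipschitz w.r.t. `d_α`, `∑_{w ∈ W*} |a(wx) − a(wy)|/𝕁(wx) < ∞`. -/
theorem statement13 {𝒜 : Type} [Fintype 𝒜] [TopologicalSpace 𝒜] [DiscreteTopology 𝒜]
    (hcard : 2 ≤ Fintype.card 𝒜)
    (J : Omega 𝒜 → ℝ) (hJ : IsGFunction J) (x y : Omega 𝒜)
    (α : ℝ) (hα : α ∈ Set.Ioo (0 : ℝ) 1)
    (hsmall : α * (Fintype.card 𝒜 : ℝ) < sInf (Set.range J))
    (a : Omega 𝒜 → ℂ)
    (ha : ∃ C : ℝ, ∀ u v : Omega 𝒜, ‖a u - a v‖ ≤ C * dAlpha α u v) :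
    Summable (fun w : Words 𝒜 =>
      ‖a (concat w.2 x) - a (concat w.2 y)‖ / JBirk J (w.1 + 1) w.2 x) := by
  obtain ⟨C, hC⟩ := ha
  obtain ⟨hα0, hα1⟩ := hα
  set m := sInf (Set.range J) with hm
  have hcardR : (0:ℝ) < (Fintype.card 𝒜 : ℝ) := by
    exact_mod_cast lt_of_lt_of_le (by norm_num) hcard
  have hm0 : 0 < m := lt_trans (by positivity) hsmall
  have hJm : ∀ z, m ≤ J z := fun z =>
    csInf_le ⟨0, by rintro r ⟨z, rfl⟩; exact (hJ.2.1 z).le⟩ ⟨z, rfl⟩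
  set C' := max C 0 with hC'def
  have hC'0 : 0 ≤ C' := le_max_right _ _
  have hC' : ∀ u v : Omega 𝒜, ‖a u - a v‖ ≤ C' * dAlpha α u v := by
    intro u v
    rcases eq_or_ne u v with rfl | h
    · simp [dAlpha]
    · have hd : 0 ≤ dAlpha α u v := by
        unfold dAlpha; rw [if_neg h]; positivity
      exact (hC u v).trans (mul_le_mul_of_nonneg_right (le_max_left _ _) hd)
  set r := α * (Fintype.card 𝒜 : ℝ) / m with hrdef
  have hr0 : 0 ≤ r := by positivity
  have hr1 : r < 1 := (div_lt_one hm0).mpr hsmall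
  have hJBpos : ∀ (k : ℕ) (w : Fin (k+1) → 𝒜), 0 < JBirk J (k+1) w x :=
    fun k w => Real.exp_pos _
  have key : ∀ (k : ℕ) (w : Fin (k+1) → 𝒜),
      ‖a (concat w x) - a (concat w y)‖ / JBirk J (k+1) w x
        ≤ C' * α ^ (k+1) / m ^ (k+1) := by
    intro k w
    have hnum : ‖a (concat w x) - a (concat w y)‖ ≤ C' * α ^ (k+1) := by
      refine (hC' (concat w x) (concat w y)).trans ?_
      have hd : dAlpha α (concat w x) (concat w y) ≤ α ^ (k+1) := by
        unfold dAlpha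
        split_ifs with h
        · positivity
        · have hne : {n : ℕ | concat w x n ≠ concat w y n}.Nonempty :=
            Function.ne_iff.mp h
          have hNmem := Nat.sInf_mem hne
          set N := sInf {n : ℕ | concat w x n ≠ concat w y n} with hN
          have hNk : k + 1 ≤ N := by
            by_contra hlt
            push_neg at hlt
            apply hNmem
            show concat w x N = concat w y N
            simp [concat, dif_pos hlt, Nat.lt_succ_iff.mp hlt]
          exact pow_le_pow_of_le_one hα0.le hα1.le (by omega)
      exact mul_le_mul_of_nonneg_left hd hC'0
    have hden : m ^ (k+1) ≤ JBirk J (k+1) w x := by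
      have hsum : ∑ _j ∈ Finset.range (k+1), Real.log m
          ≤ birkhoff (fun z => Real.log (J z)) (k+1) (concat w x) := by
        apply Finset.sum_le_sum
        intro j _
        exact Real.log_le_log hm0 (hJm _)
      rw [Finset.sum_const, Finset.card_range, nsmul_eq_mul] at hsum
      calc m ^ (k+1) = Real.exp (Real.log m) ^ (k+1) := by rw [Real.exp_log hm0]
        _ = Real.exp ((↑(k+1) : ℝ) * Real.log m) := (Real.exp_nat_mul _ _).symm
        _ ≤ JBirk J (k+1) w x := Real.exp_le_exp.mpr hsum
    have hmk : (0:ℝ) < m ^ (k+1) := by positivity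
    exact div_le_div₀ (by positivity) hnum hmk hden
  have hnonneg : ∀ w : Σ k : ℕ, Fin (k + 1) → 𝒜,
      0 ≤ ‖a (concat w.2 x) - a (concat w.2 y)‖ / JBirk J (w.1 + 1) w.2 x :=
    fun w => div_nonneg (norm_nonneg _) (hJBpos w.1 w.2).le
  show Summable (fun w : Σ k : ℕ, Fin (k + 1) → 𝒜 =>
      ‖a (concat w.2 x) - a (concat w.2 y)‖ / JBirk J (w.1 + 1) w.2 x)
  rw [summable_sigma_of_nonneg hnonneg]
  constructor
  · intro k
    exact Summable.of_finite
  · refine Summable.of_nonneg_of_le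
      (fun k => tsum_nonneg (fun w => hnonneg ⟨k, w⟩)) ?_
      (((summable_geometric_of_lt_one hr0 hr1).mul_right r).mul_left C')
    · intro k
      rw [tsum_fintype]
      calc ∑ w : Fin (k+1) → 𝒜,
            ‖a (concat w x) - a (concat w y)‖ / JBirk J (k+1) w x
          ≤ ∑ _w : Fin (k+1) → 𝒜, C' * α ^ (k+1) / m ^ (k+1) :=
            Finset.sum_le_sum (fun w _ => key k w)
        _ = (Fintype.card 𝒜 : ℝ) ^ (k+1) * (C' * α ^ (k+1) / m ^ (k+1)) := by
            rw [Finset.sum_const, Finset.card_univ, nsmul_eq_mul]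
            norm_num [Fintype.card_fun]
        _ = C' * (r ^ k * r) := by
            rw [hrdef, ← pow_succ, div_pow, mul_pow]
            field_simp

end GS
end
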